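/- arXiv:2306.12154 — 16 statements merged into one kernel-verified Lean document; each statement's English description precedes it below -/
import Mathlib

section
/- Let λ > 0, r > 0, x_R > 0, and set s = √(2(λ + r)). Define M : ℝ → ℝ by M(x) = exp(−x·s) + (r/(λ + r·exp(−x_R·s)))·(exp(−x_R·s) − exp(−(x + x_R)·s)). Then: (i) for all x, (1/2)·M''(x) − (λ + r)·M(x) + r·M(x_R) = 0; (ii) M(0) = 1; (iii) M(x) tends to a finite limit as x → +∞; and (iv) M(x_R) = (λ + r)·exp(−x_R·s) / (λ + r·exp(−x_R·s)). -/
open Real Set Filter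

theorem stmt_1 (lam r xR s : ℝ) (hlam : 0 < lam) (hr : 0 < r) (hxR : 0 < xR)
    (hs : s = Real.sqrt (2 * (lam + r)))
    (M : ℝ → ℝ)
    (hM : ∀ x, M x = Real.exp (-x * s)
      + (r / (lam + r * Real.exp (-xR * s)))
        * (Real.exp (-xR * s) - Real.exp (-(x + xR) * s))) :
    (∀ x : ℝ, (1/2) * deriv (deriv M) x - (lam + r) * M x + r * M xR = 0)
    ∧ M 0 = 1
    ∧ (∃ L : ℝ, Filter.Tendsto M Filter.atTop (nhds L))
    ∧ M xR = (lam + r) * Real.exp (-xR * s) / (lam + r * Real.exp (-xR * s)) := by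
  set a : ℝ := Real.exp (-xR * s) with ha
  have ha0 : 0 < a := Real.exp_pos _
  have hD : 0 < lam + r * a := by positivity
  set c : ℝ := r / (lam + r * a) with hc
  set A : ℝ := 1 - c * a with hA
  set B : ℝ := c * a with hB
  have hMfun : M = fun x => A * Real.exp (-(s * x)) + B := by
    funext x
    rw [hM x]
    have : Real.exp (-(x + xR) * s) = Real.exp (-x * s) * a := by
      rw [ha, ← Real.exp_add]; ring_nf
    rw [this]
    have : -x * s = -(s * x) := by ring
    rw [this]
    ring
  have hs2 : s ^ 2 = 2 * (lam + r) := by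
    rw [hs, Real.sq_sqrt]; positivity
  have hMxR : M xR = (lam + r) * a / (lam + r * a) := by
    rw [hM xR]
    have : Real.exp (-(xR + xR) * s) = a * a := by
      rw [ha, ← Real.exp_add]; ring_nf
    rw [this, ← ha, hc]
    field_simp
    ring
  have hd1 : deriv M = fun x => A * (-s * Real.exp (-(s * x))) := by
    funext x
    rw [hMfun]
    have h1 : HasDerivAt (fun x : ℝ => A * Real.exp (-(s * x)) + B)
        (A * (Real.exp (-(s * x)) * -s) + 0) x := by
      simpa using (((hasDerivAt_id x).const_mul s).neg.exp.const_mul A).add_const B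
    rw [h1.deriv]; ring
  have hd2 : ∀ x, deriv (deriv M) x = A * (s * s * Real.exp (-(s * x))) := by
    intro x
    rw [hd1]
    have h1 : HasDerivAt (fun x : ℝ => A * (-s * Real.exp (-(s * x))))
        (A * (-s * (Real.exp (-(s * x)) * -s))) x := by
      simpa using ((((hasDerivAt_id x).const_mul s).neg.exp).const_mul (-s)).const_mul A
    rw [h1.deriv]; ring
  refine ⟨?_, ?_, ?_, ?_⟩
  · intro x
    have hx : M x = A * Real.exp (-(s * x)) + B := by rw [hMfun]
    rw [hd2 x, hMxR, hx]
    have hss : s * s = 2 * (lam + r) := by nlinarith [hs2]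
    rw [hss]
    have hBval : B = r * a / (lam + r * a) := by rw [hB, hc]; ring
    have : (lam + r) * B = r * ((lam + r) * a / (lam + r * a)) := by
      rw [hBval]; field_simp
    nlinarith [this]
  · rw [hM 0, show (-(0:ℝ)*s) = 0 by ring, show (-((0:ℝ)+xR)*s) = -xR*s by ring,
      Real.exp_zero, ← ha]
    ring
  · refine ⟨B, ?_⟩
    rw [hMfun]
    have : Tendsto (fun x : ℝ => A * Real.exp (-(s * x))) atTop (nhds 0) := by
      have hs0 : 0 < s := by
        rw [hs]; exact Real.sqrt_pos.mpr (by positivity)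
      have := (tendsto_exp_atBot).comp
        (tendsto_neg_atBot_iff.mpr ((tendsto_id.const_mul_atTop hs0)))
      simpa using this.const_mul A
    simpa using this.add_const B
  · rw [hMxR, ha]
end

section
/- Let r > 0 and x_R > 0. If T : ℝ → ℝ is twice continuously differentiable on [0, ∞), bounded on [0, ∞), satisfies T(0) = 0 and (1/2)·T''(x) − r·T(x) = −1 − r·T(x_R) for all x ≥ 0, then T(x) = (1/r)·exp(x_R·√(2r))·(1 − exp(−x·√(2r))) for all x ≥ 0; in particular T(x_R) = (exp(x_R·√(2r)) − 1)/r and T(x) → (1/r)·exp(x_R·√(2r)) as x → +∞. -/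
open Real Set Filter

private lemma constOn (f : ℝ → ℝ)
    (hf : ∀ x ∈ Set.Ici (0:ℝ), HasDerivWithinAt f 0 (Set.Ici 0) x) :
    ∀ x ∈ Set.Ici (0:ℝ), f x = f 0 := by
  intro x hx
  have hcont : ContinuousOn f (Set.Icc 0 x) := fun y hy =>
    ((hf y hy.1).continuousWithinAt).mono Set.Icc_subset_Ici_self
  have hderiv : ∀ y ∈ Set.Ico (0:ℝ) x, HasDerivWithinAt f 0 (Set.Ici y) y := fun y hy =>
    (hf y hy.1).mono (Set.Ici_subset_Ici.mpr hy.1)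
  exact constant_of_has_deriv_right_zero hcont hderiv x ⟨hx, le_rfl⟩

theorem stmt_2 (r xR : ℝ) (hr : 0 < r) (hxR : 0 < xR) (T : ℝ → ℝ)
    (hreg : ContDiffOn ℝ 2 T (Set.Ici 0))
    (hbdd : ∃ C, ∀ x ∈ Set.Ici (0:ℝ), |T x| ≤ C)
    (h0 : T 0 = 0)
    (hode : ∀ x ∈ Set.Ici (0:ℝ),
      (1/2) * iteratedDerivWithin 2 T (Set.Ici 0) x - r * T x = -1 - r * T xR) :
    (∀ x ∈ Set.Ici (0:ℝ),
      T x = (1/r) * Real.exp (xR * Real.sqrt (2*r)) * (1 - Real.exp (-x * Real.sqrt (2*r))))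
    ∧ T xR = (Real.exp (xR * Real.sqrt (2*r)) - 1) / r
    ∧ Filter.Tendsto T Filter.atTop
        (nhds ((1/r) * Real.exp (xR * Real.sqrt (2*r)))) := by
  have hsu : UniqueDiffOn ℝ (Set.Ici (0:ℝ)) := uniqueDiffOn_Ici 0
  set s : Set ℝ := Set.Ici 0 with hs_def
  set l := Real.sqrt (2*r) with hl_def
  have hl2 : l^2 = 2*r := Real.sq_sqrt (by linarith)
  have hlpos : 0 < l := Real.sqrt_pos.mpr (by linarith)
  set A := 1/r + T xR with hA_def
  set T1 := derivWithin T s with hT1_def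
  have hTd : DifferentiableOn ℝ T s := hreg.differentiableOn (by norm_num)
  have hT1cd : ContDiffOn ℝ 1 T1 s := hreg.derivWithin hsu (by norm_num)
  have hT1d : DifferentiableOn ℝ T1 s := hT1cd.differentiableOn (by norm_num)
  have hT1deriv : ∀ x ∈ s, HasDerivWithinAt T (T1 x) s x := fun x hx =>
    (hTd x hx).hasDerivWithinAt
  have hT2 : ∀ x ∈ s, HasDerivWithinAt T1 (2*r*T x - 2 - 2*r*T xR) s x := by
    intro x hx
    have h1 : HasDerivWithinAt T1 (derivWithin T1 s x) s x := (hT1d x hx).hasDerivWithinAt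
    have h2 : derivWithin T1 s x = iteratedDerivWithin 2 T s x := by
      rw [show (2:ℕ) = 1 + 1 from rfl, iteratedDerivWithin_succ]
      exact derivWithin_congr (fun y hy => (congrFun iteratedDerivWithin_one y).symm)
        (congrFun iteratedDerivWithin_one x).symm
    have h3 : iteratedDerivWithin 2 T s x = 2*r*T x - 2 - 2*r*T xR := by
      have := hode x hx; linarith
    rw [h2, h3] at h1; exact h1
  have h2rA : 2*r*A = 2 + 2*r*T xR := by
    rw [hA_def]; field_simp
  -- h := T1 + l (T - A)
  have hh : ∀ x ∈ s, HasDerivWithinAt (fun y => T1 y + l*(T y - A))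
      (l * (T1 x + l*(T x - A))) s x := by
    intro x hx
    have : HasDerivWithinAt (fun y => T1 y + l*(T y - A))
        (2*r*T x - 2 - 2*r*T xR + l * T1 x) s x := (hT2 x hx).add (((hT1deriv x hx).sub_const A).const_mul l)
    convert this using 1
    linear_combination (T x - A) * hl2 - h2rA
  set H0 := T1 0 + l*(T 0 - A) with hH0_def
  have hφ : ∀ x ∈ s, HasDerivWithinAt
      (fun y => Real.exp (-(l*y)) * (T1 y + l*(T y - A))) 0 s x := by
    intro x hx
    have h1 : HasDerivAt (fun y : ℝ => -(l*y)) (-l) x := by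
      have := ((hasDerivAt_id x).const_mul l).neg; rw [mul_one] at this; exact this
    have he : HasDerivAt (fun y => Real.exp (-(l*y))) (Real.exp (-(l*x)) * (-l)) x := h1.exp
    have : HasDerivWithinAt (fun y => Real.exp (-(l*y)) * (T1 y + l*(T y - A)))
        (Real.exp (-(l*x)) * (-l) * (T1 x + l*(T x - A)) + Real.exp (-(l*x)) * (l * (T1 x + l*(T x - A)))) s x :=
      he.hasDerivWithinAt.mul (hh x hx)
    convert this using 1
    ring
  have hφc := constOn _ hφ
  have hhx : ∀ x ∈ s, T1 x + l*(T x - A) = Real.exp (l*x) * H0 := by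
    intro x hx
    have h1 := hφc x hx
    simp only [mul_zero, neg_zero, Real.exp_zero, one_mul] at h1
    have h2 : Real.exp (l*x) * (Real.exp (-(l*x)) * (T1 x + l*(T x - A)))
        = Real.exp (l*x) * H0 := by rw [h1, hH0_def]
    rwa [← mul_assoc, ← Real.exp_add, add_neg_cancel, Real.exp_zero, one_mul] at h2
  have hψ : ∀ x ∈ s, HasDerivWithinAt
      (fun y => Real.exp (l*y) * (T y - A) - H0 * Real.exp (2*l*y) / (2*l)) 0 s x := by
    intro x hx
    have he : HasDerivAt (fun y => Real.exp (l*y)) (Real.exp (l*x) * l) x := by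
      have h1 : HasDerivAt (fun y : ℝ => l*y) l x := by
        simpa using (hasDerivAt_id x).const_mul l
      exact h1.exp
    have he2 : HasDerivAt (fun y => Real.exp (2*l*y)) (Real.exp (2*l*x) * (2*l)) x := by
      have h1 : HasDerivAt (fun y : ℝ => 2*l*y) (2*l) x := by
        simpa using (hasDerivAt_id x).const_mul (2*l)
      exact h1.exp
    have hd : HasDerivWithinAt (fun y => Real.exp (l*y) * (T y - A) - H0 * Real.exp (2*l*y) / (2*l))
        (Real.exp (l*x) * l * (T x - A) + Real.exp (l*x) * T1 x - H0 * (Real.exp (2*l*x) * (2*l)) / (2*l)) s x :=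
      (he.hasDerivWithinAt.mul ((hT1deriv x hx).sub_const A)).sub
      (((he2.const_mul H0).div_const (2*l)).hasDerivWithinAt)
    convert hd using 1
    have hx' := hhx x hx
    have hexp : Real.exp (2*l*x) = Real.exp (l*x) * Real.exp (l*x) := by
      rw [← Real.exp_add]; ring_nf
    have hdiv : H0 * (Real.exp (2*l*x) * (2*l)) / (2*l) = H0 * Real.exp (2*l*x) := by
      field_simp
    rw [hdiv]
    linear_combination (-Real.exp (l*x)) * hx' + H0 * hexp
  have hψc := constOn _ hψ
  have hTform : ∀ x ∈ s, Real.exp (l*x) * (T x - A)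
      = H0 * Real.exp (2*l*x) / (2*l) - A - H0/(2*l) := by
    intro x hx
    have h1 := hψc x hx
    simp only [mul_zero, Real.exp_zero, one_mul, mul_one, h0, zero_sub] at h1
    linear_combination h1
  obtain ⟨C, hC⟩ := hbdd
  have hC0 : 0 ≤ C := by have := hC 0 Set.self_mem_Ici; rw [h0] at this; simpa using this
  have hH0 : H0 = 0 := by
    by_contra hne
    set k := H0 / (2*l) with hk_def
    have hk : k ≠ 0 := div_ne_zero hne (by positivity)
    set M := C + 2*|A| + |k| with hM_def
    have hM0 : 0 ≤ M := by positivity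
    have key : ∀ x ∈ s, |k| * Real.exp (l*x) ≤ M := by
      intro x hx
      set E := Real.exp (l*x) with hE_def
      have hEpos : 0 < E := Real.exp_pos _
      have hxnn : (0:ℝ) ≤ x := hx
      have hE1 : 1 ≤ E := by
        rw [hE_def, show (1:ℝ) = Real.exp 0 from Real.exp_zero.symm]
        exact Real.exp_le_exp.mpr (mul_nonneg hlpos.le hxnn)
      have hexp : Real.exp (2*l*x) = E * E := by
        rw [hE_def, ← Real.exp_add]; congr 1; ring
      have h1 : k * (E*E) = E*(T x - A) + A + k := by
        have h2 := hTform x hx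
        rw [hexp] at h2
        rw [hk_def]
        linear_combination -h2
      have h2 : |k| * (E*E) ≤ E*(C+|A|) + |A| + |k| := by
        calc |k| * (E*E) = |k * (E*E)| := by
              rw [abs_mul, abs_of_pos (by positivity : (0:ℝ) < E*E)]
          _ = |E*(T x - A) + A + k| := by rw [h1]
          _ ≤ E*|T x - A| + |A| + |k| := by
              calc |E*(T x - A) + A + k| ≤ |E*(T x - A) + A| + |k| := abs_add_le _ _
                _ ≤ |E*(T x - A)| + |A| + |k| := by linarith [abs_add_le (E*(T x - A)) A]
                _ = E*|T x - A| + |A| + |k| := by rw [abs_mul, abs_of_pos hEpos]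
          _ ≤ E*(C+|A|) + |A| + |k| := by
              have : |T x - A| ≤ C + |A| := by
                calc |T x - A| ≤ |T x| + |A| := abs_sub _ _
                  _ ≤ C + |A| := by linarith [hC x hx]
              nlinarith
      have h3 : |k| * (E*E) ≤ E * M := by
        have : |A| + |k| ≤ E * (|A| + |k|) := le_mul_of_one_le_left (by positivity) hE1
        nlinarith
      nlinarith [abs_nonneg k]
    set x0 := max 0 (Real.log ((M+1)/|k|) / l) with hx0_def
    have hx0 : x0 ∈ s := Set.mem_Ici.mpr (le_max_left _ _)
    have hkpos : 0 < |k| := abs_pos.mpr hk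
    have hlx0 : Real.log ((M+1)/|k|) ≤ l * x0 := by
      have h1 : Real.log ((M+1)/|k|) / l ≤ x0 := le_max_right _ _
      calc Real.log ((M+1)/|k|) = l * (Real.log ((M+1)/|k|) / l) := by
            field_simp
        _ ≤ l * x0 := by nlinarith
    have hEbig : (M+1)/|k| ≤ Real.exp (l*x0) := by
      calc (M+1)/|k| = Real.exp (Real.log ((M+1)/|k|)) :=
            (Real.exp_log (by positivity)).symm
        _ ≤ Real.exp (l*x0) := Real.exp_le_exp.mpr hlx0
    have : M + 1 ≤ |k| * Real.exp (l*x0) := by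
      rw [div_le_iff₀ hkpos] at hEbig; linarith [hEbig]
    linarith [key x0 hx0]
  have hTval : ∀ x ∈ s, T x = A * (1 - Real.exp (-(l*x))) := by
    intro x hx
    have h1 := hTform x hx
    rw [hH0] at h1
    simp only [zero_mul, zero_div, zero_sub, sub_zero] at h1
    have h2 : Real.exp (-(l*x)) * (Real.exp (l*x) * (T x - A))
        = Real.exp (-(l*x)) * (-A) := by rw [h1]
    rw [← mul_assoc, ← Real.exp_add, neg_add_cancel, Real.exp_zero, one_mul] at h2
    linear_combination h2
  have he1 : Real.exp (-(l*xR)) * Real.exp (l*xR) = 1 := by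
    rw [← Real.exp_add]; simp
  have hAe : A * Real.exp (-(l*xR)) = 1/r := by
    have h1 := hTval xR hxR.le
    rw [hA_def] at h1 ⊢
    linear_combination h1
  have hA : A = (1/r) * Real.exp (xR*l) := by
    have harg : Real.exp (xR*l) = Real.exp (l*xR) := by rw [mul_comm]
    rw [harg]
    linear_combination Real.exp (l*xR) * hAe - A * he1
  refine ⟨?_, ?_, ?_⟩
  · intro x hx
    rw [hTval x hx, hA, show -x*l = -(l*x) from by ring]
  · rw [hTval xR hxR.le, hA]
    have he1' : Real.exp (-(l*xR)) * Real.exp (xR*l) = 1 := by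
      rw [← Real.exp_add]; simp [mul_comm]
    field_simp
    rw [mul_comm xR l]; linear_combination -he1
  · have hlim : Tendsto (fun x => A * (1 - Real.exp (-(l*x)))) atTop
        (nhds (A * (1 - 0))) := by
      apply Tendsto.const_mul
      apply Tendsto.const_sub
      have h1 : Tendsto (fun x:ℝ => -(l*x)) atTop atBot := by
        rw [Filter.tendsto_neg_atBot_iff]
        exact Tendsto.const_mul_atTop hlpos tendsto_id
      exact Real.tendsto_exp_atBot.comp h1
    have heq : (fun x => A * (1 - Real.exp (-(l*x)))) =ᶠ[atTop] T :=
      (eventually_ge_atTop 0).mono fun x hx => (hTval x hx).symm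
    have := hlim.congr' heq
    simpa [hA, mul_comm] using this
end

section
/- Let r > 0, x_R > 0, s = √(2r), and let T₁(x) = (1/r)·e^{x_R·s}·(1 − e^{−x·s}). Define T₂ : ℝ → ℝ by T₂(x) = e^{x_R·s}·((2/r²)·e^{x_R·s} − 2/r² − 2x_R/(r·s))·(1 − e^{−x·s}) − (2/r)·e^{(x_R − x)·s}·(1/r + x/s) + (2/r²)·e^{x_R·s}. Then: (i) for all x ≥ 0, (1/2)·T₂''(x) − r·T₂(x) = −2·T₁(x) − r·T₂(x_R); (ii) T₂(0) = 0; (iii) T₂ is bounded on [0, ∞); and (iv) T₂(x_R) = e^{x_R·s}·((2/r²)·e^{x_R·s} − 2/r² − 2x_R/(r·s)). -/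
open Real Set Filter

lemma aux_f (A K C xR r s x : ℝ) :
    HasDerivAt (fun x => A * (1 - Real.exp (-x*s)) - K * Real.exp ((xR - x)*s) * (1/r + x/s) + C)
      (A*s*Real.exp (-x*s) + K*s*Real.exp ((xR - x)*s)*(1/r + x/s) - K*Real.exp ((xR - x)*s)/s) x := by
  have h1 : HasDerivAt (fun x : ℝ => -x*s) (-1*s) x := (hasDerivAt_id x).neg.mul_const s
  have h2 : HasDerivAt (fun x : ℝ => 1 - Real.exp (-x*s)) (0 - Real.exp (-x*s) * (-1*s)) x :=
    (hasDerivAt_const x (1:ℝ)).sub h1.exp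
  have h3 : HasDerivAt (fun x : ℝ => (xR - x)*s) ((0-1)*s) x :=
    ((hasDerivAt_const x xR).sub (hasDerivAt_id x)).mul_const s
  have h4 : HasDerivAt (fun x : ℝ => 1/r + x/s) (0 + 1/s) x :=
    (hasDerivAt_const x (1/r)).add ((hasDerivAt_id x).div_const s)
  have h5 := ((h2.const_mul A).sub ((h3.exp.const_mul K).mul h4)).add_const C
  refine h5.congr_deriv ?_
  ring

lemma aux_g (A K xR r s x : ℝ) (hs : s ≠ 0) :
    HasDerivAt (fun x => A*s*Real.exp (-x*s) + K*s*Real.exp ((xR - x)*s)*(1/r + x/s) - K*Real.exp ((xR - x)*s)/s)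
      (-(A*s^2*Real.exp (-x*s)) - K*s^2*Real.exp ((xR - x)*s)*(1/r + x/s) + 2*K*Real.exp ((xR - x)*s)) x := by
  have h1 : HasDerivAt (fun x : ℝ => -x*s) (-1*s) x := (hasDerivAt_id x).neg.mul_const s
  have h3 : HasDerivAt (fun x : ℝ => (xR - x)*s) ((0-1)*s) x :=
    ((hasDerivAt_const x xR).sub (hasDerivAt_id x)).mul_const s
  have h4 : HasDerivAt (fun x : ℝ => 1/r + x/s) (0 + 1/s) x :=
    (hasDerivAt_const x (1/r)).add ((hasDerivAt_id x).div_const s)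
  have h5 := ((h1.exp.const_mul (A*s)).add (((h3.exp.const_mul (K*s)).mul h4))).sub
    ((h3.exp.const_mul K).div_const s)
  refine h5.congr_deriv ?_
  field_simp
  ring


theorem stmt_3 (r xR s : ℝ) (hr : 0 < r) (hxR : 0 < xR) (hs : s = Real.sqrt (2*r))
    (T₁ T₂ : ℝ → ℝ)
    (hT1 : ∀ x, T₁ x = (1/r) * Real.exp (xR*s) * (1 - Real.exp (-x*s)))
    (hT2 : ∀ x, T₂ x =
      Real.exp (xR*s) * ((2/r^2) * Real.exp (xR*s) - 2/r^2 - 2*xR/(r*s))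
        * (1 - Real.exp (-x*s))
      - (2/r) * Real.exp ((xR - x)*s) * (1/r + x/s)
      + (2/r^2) * Real.exp (xR*s)) :
    (∀ x : ℝ, 0 ≤ x →
      (1/2) * deriv (deriv T₂) x - r * T₂ x = -2 * T₁ x - r * T₂ xR)
    ∧ T₂ 0 = 0
    ∧ (∃ C, ∀ x ∈ Set.Ici (0:ℝ), |T₂ x| ≤ C)
    ∧ T₂ xR = Real.exp (xR*s) * ((2/r^2) * Real.exp (xR*s) - 2/r^2 - 2*xR/(r*s)) := by
  have hr0 : r ≠ 0 := ne_of_gt hr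
  have hs0 : 0 < s := by rw [hs]; exact Real.sqrt_pos.mpr (by linarith)
  have hsne : s ≠ 0 := ne_of_gt hs0
  have hs2 : s^2 = 2*r := by
    rw [hs]; exact Real.sq_sqrt (by linarith)
  set E := Real.exp (xR*s) with hE
  set A := E * ((2/r^2) * E - 2/r^2 - 2*xR/(r*s)) with hA
  set K := 2/r with hK
  set C := (2/r^2) * E with hC
  have hEpos : 0 < E := Real.exp_pos _
  have hT2' : T₂ = fun x => A * (1 - Real.exp (-x*s)) - K * Real.exp ((xR - x)*s) * (1/r + x/s) + C := by
    funext x; rw [hT2]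
  have hsplit : ∀ x : ℝ, Real.exp ((xR - x)*s) = E * Real.exp (-x*s) := by
    intro x
    rw [hE, ← Real.exp_add]
    ring_nf
  -- part (iv)
  have h4 : T₂ xR = A := by
    rw [hT2 xR]
    have h1 : Real.exp ((xR - xR)*s) = 1 := by norm_num
    have h2 : Real.exp (-xR*s) = E⁻¹ := by
      rw [hE, ← Real.exp_neg]; ring_nf
    rw [h1, h2, hA, hC, hK]
    field_simp
    ring
  -- derivatives
  have hderiv1 : deriv T₂ = fun x =>
      A*s*Real.exp (-x*s) + K*s*Real.exp ((xR - x)*s)*(1/r + x/s) - K*Real.exp ((xR - x)*s)/s := by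
    funext x
    rw [hT2']
    exact (aux_f A K C xR r s x).deriv
  have hderiv2 : ∀ x : ℝ, deriv (deriv T₂) x =
      -(A*s^2*Real.exp (-x*s)) - K*s^2*Real.exp ((xR - x)*s)*(1/r + x/s) + 2*K*Real.exp ((xR - x)*s) := by
    intro x
    rw [hderiv1]
    exact (aux_g A K xR r s x hsne).deriv
  refine ⟨?_, ?_, ?_, ?_⟩
  · intro x _
    rw [hderiv2, hT2 x, hT1, h4, hsplit x, hs2]
    rw [hK, hC]
    field_simp
    ring
  · rw [hT2 0, hsplit 0]
    simp only [neg_zero, zero_mul, Real.exp_zero, sub_zero, zero_div, add_zero, mul_one, sub_self, mul_zero]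
    rw [hC, hK]
    field_simp
    ring
  · refine ⟨|A| + K * E * (1/r + 1/s^2) + C, fun x hx => ?_⟩
    rw [hT2 x, hsplit x]
    have hx0 : (0:ℝ) ≤ x := hx
    set e := Real.exp (-x*s) with hee
    have hepos : 0 < e := Real.exp_pos _
    have he1 : e ≤ 1 := by
      rw [hee, Real.exp_le_one_iff]
      nlinarith
    have hxe : e * x ≤ 1/s := by
      have h := Real.add_one_le_exp (x*s)
      have hinv : e * Real.exp (x*s) = 1 := by
        rw [hee, ← Real.exp_add]
        norm_num
      have hxs : x*s ≤ Real.exp (x*s) := by nlinarith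
      have hmul := mul_le_mul_of_nonneg_left hxs hepos.le
      rw [le_div_iff₀ hs0]
      calc e * x * s = e * (x*s) := by ring
        _ ≤ e * Real.exp (x*s) := hmul
        _ = 1 := hinv
    have h1 : |A * (1 - e)| ≤ |A| := by
      rw [abs_mul]
      have h1e : |1 - e| ≤ 1 := abs_le.mpr ⟨by linarith, by linarith⟩
      calc |A| * |1 - e| ≤ |A| * 1 := mul_le_mul_of_nonneg_left h1e (abs_nonneg A)
        _ = |A| := mul_one _
    have hKpos : 0 < K := by rw [hK]; positivity
    have hCpos : 0 < C := by rw [hC]; positivity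
    have hfr : 0 ≤ 1/r + x/s := by positivity
    have h2 : 0 ≤ K * (E * e) * (1/r + x/s) :=
      mul_nonneg (mul_nonneg hKpos.le (mul_nonneg hEpos.le hepos.le)) hfr
    have ha1 : e * (1/r) ≤ 1/r := by
      have := mul_le_mul_of_nonneg_right he1 (le_of_lt (one_div_pos.mpr hr))
      linarith
    have ha2 : e * (x/s) ≤ 1/s^2 := by
      have hh : (e*x)/s ≤ (1/s)/s := by gcongr
      calc e * (x/s) = (e*x)/s := by ring
        _ ≤ (1/s)/s := hh
        _ = 1/s^2 := by rw [div_div, ← sq]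
    have h3 : K * (E * e) * (1/r + x/s) ≤ K * E * (1/r + 1/s^2) := by
      have heq : K * (E*e) * (1/r + x/s) = K * E * (e*(1/r) + e*(x/s)) := by ring
      rw [heq]
      exact mul_le_mul_of_nonneg_left (by linarith) (mul_nonneg hKpos.le hEpos.le)
    calc |A*(1-e) - K*(E*e)*(1/r+x/s) + C|
        ≤ |A*(1-e) - K*(E*e)*(1/r+x/s)| + |C| := abs_add_le _ _
      _ ≤ |A*(1-e)| + |K*(E*e)*(1/r+x/s)| + |C| := by
          have := abs_sub (A*(1-e)) (K*(E*e)*(1/r+x/s))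
          linarith
      _ = |A*(1-e)| + K*(E*e)*(1/r+x/s) + C := by rw [abs_of_nonneg h2, abs_of_pos hCpos]
      _ ≤ |A| + K*E*(1/r+1/s^2) + C := by linarith
  · exact h4
end

section
/- Let r > 0, x_R > 0, s = √(2r), and define V(x) = T₂(x) − T₁(x)², where T₁(x) = (1/r)·e^{x_R·s}·(1 − e^{−x·s}) and T₂(x) = e^{x_R·s}·((2/r²)e^{x_R·s} − 2/r² − 2x_R/(r·s))·(1 − e^{−x·s}) − (2/r)·e^{(x_R − x)·s}·(1/r + x/s) + (2/r²)·e^{x_R·s}. Set β = e^{x_R·s}·((2/r²)e^{x_R·s} − 2/r² − 2x_R/(r·s)), a₂ = s·β + (√2/(r·√r))·e^{x_R·s}, and a₄ = β + (2/r²)·e^{x_R·s} − (1/r²)·e^{2x_R·s}. Then (V(x) − a₂·x)/x → 0 as x → 0⁺, and V(x) → a₄ as x → +∞. -/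
open Real Set Filter Topology

theorem stmt_6 (r xR s β a₂ a₄ : ℝ) (hr : 0 < r) (hxR : 0 < xR)
    (hs : s = Real.sqrt (2*r))
    (T₁ T₂ V : ℝ → ℝ)
    (hT1 : ∀ x, T₁ x = (1/r) * Real.exp (xR*s) * (1 - Real.exp (-x*s)))
    (hT2 : ∀ x, T₂ x =
      Real.exp (xR*s) * ((2/r^2) * Real.exp (xR*s) - 2/r^2 - 2*xR/(r*s))
        * (1 - Real.exp (-x*s))
      - (2/r) * Real.exp ((xR - x)*s) * (1/r + x/s)
      + (2/r^2) * Real.exp (xR*s))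
    (hV : ∀ x, V x = T₂ x - (T₁ x)^2)
    (hβ : β = Real.exp (xR*s) * ((2/r^2) * Real.exp (xR*s) - 2/r^2 - 2*xR/(r*s)))
    (ha2 : a₂ = s * β + (Real.sqrt 2 / (r * Real.sqrt r)) * Real.exp (xR*s))
    (ha4 : a₄ = β + (2/r^2) * Real.exp (xR*s) - (1/r^2) * Real.exp (2*xR*s)) :
    Filter.Tendsto (fun x => (V x - a₂ * x) / x) (nhdsWithin 0 (Set.Ioi 0)) (nhds 0)
    ∧ Filter.Tendsto V Filter.atTop (nhds a₄) := by
  have hspos : 0 < s := by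
    rw [hs]; exact Real.sqrt_pos.mpr (by linarith)
  have hs2 : s * s = 2 * r := by
    rw [hs]; exact Real.mul_self_sqrt (by linarith)
  set E := Real.exp (xR*s) with hE
  have hVx : ∀ x, V x = β * (1 - Real.exp (-x*s))
      - (2/r) * (Real.exp ((xR - x)*s) * (1/r + x/s))
      + (2/r^2) * E
      - ((1/r) * E * (1 - Real.exp (-x*s)))^2 := by
    intro x; rw [hV, hT1, hT2, hβ]; ring
  -- key algebraic fact
  have htpos : 0 < Real.sqrt r := Real.sqrt_pos.mpr hr
  have ht : Real.sqrt r * Real.sqrt r = r := Real.mul_self_sqrt hr.le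
  have h2 : Real.sqrt 2 * Real.sqrt 2 = 2 := Real.mul_self_sqrt (by norm_num)
  have hst : s = Real.sqrt 2 * Real.sqrt r := by
    rw [hs, Real.sqrt_mul (by norm_num)]
  have hkey : Real.sqrt 2 / (r * Real.sqrt r) = 2*s/r^2 - 2/(r*s) := by
    rw [hst]
    field_simp
    ring_nf
    linear_combination (r - 2*(Real.sqrt r)^2)*h2 - 4*ht
  -- derivative of V at 0
  have hA : HasDerivAt (fun x : ℝ => 1 - Real.exp (-x*s)) s 0 := by
    have h1 : HasDerivAt (fun x:ℝ => -x*s) (-s) 0 := by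
      simpa using ((hasDerivAt_id (0:ℝ)).neg.mul_const s)
    have h1e := h1.exp
    refine HasDerivAt.congr_deriv ((hasDerivAt_const (0:ℝ) (1:ℝ)).sub h1e) ?_
    simp
  have hB : HasDerivAt (fun x : ℝ => Real.exp ((xR - x)*s)) (-(E*s)) 0 := by
    have h1 : HasDerivAt (fun x:ℝ => (xR - x)*s) (-s) 0 := by
      simpa using (((hasDerivAt_const (0:ℝ) xR).sub (hasDerivAt_id 0)).mul_const s)
    have h1e := h1.exp
    simpa [hE, mul_comm] using h1e
  have hC : HasDerivAt (fun x : ℝ => 1/r + x/s) (1/s) 0 := by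
    simpa using ((hasDerivAt_id (0:ℝ)).div_const s).const_add (1/r)
  have hF := (((hA.const_mul β).sub ((hB.mul hC).const_mul (2/r))).add_const
      ((2/r^2)*E)).sub ((hA.const_mul ((1/r)*E)).pow 2)
  have hderiv : HasDerivAt V a₂ 0 := by
    have hVeq : V = fun x => β * (1 - Real.exp (-x*s))
        - (2/r) * (Real.exp ((xR - x)*s) * (1/r + x/s))
        + (2/r^2) * E
        - ((1/r) * E * (1 - Real.exp (-x*s)))^2 := funext hVx
    rw [hVeq]
    refine hF.congr_deriv ?_
    symm
    rw [ha2, hkey]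
    simp only [neg_zero, zero_mul, Real.exp_zero, sub_zero, mul_one, sub_self, mul_zero,
      zero_div, add_zero, pow_one]
    field_simp
    rw [hE, mul_comm s xR]
    ring
  -- part 1
  have h0 : V 0 = 0 := by
    rw [hVx]; simp; ring
  have hslope : Tendsto (fun x => V x / x) (𝓝[>] (0:ℝ)) (𝓝 a₂) := by
    have h1 := hasDerivAt_iff_tendsto_slope.mp hderiv
    have h2' : Tendsto (slope V 0) (𝓝[>] (0:ℝ)) (𝓝 a₂) :=
      h1.mono_left (nhdsWithin_mono 0 (fun x hx => ne_of_gt hx))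
    refine h2'.congr (fun x => ?_)
    rw [slope_def_field, h0]
    simp
  have part1 : Tendsto (fun x => (V x - a₂ * x) / x) (𝓝[>] (0:ℝ)) (𝓝 0) := by
    have h3 := hslope.sub_const a₂
    rw [sub_self] at h3
    refine h3.congr' ?_
    filter_upwards [self_mem_nhdsWithin] with x hx
    have hx0 : x ≠ 0 := ne_of_gt hx
    field_simp
  -- part 2
  have hexp : Tendsto (fun x : ℝ => Real.exp (-x*s)) atTop (𝓝 0) := by
    have h1 : Tendsto (fun x : ℝ => -x*s) atTop atBot := by
      have := (tendsto_id.atTop_mul_const hspos : Tendsto (fun x : ℝ => x*s) atTop atTop)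
      simpa [Function.comp_def] using tendsto_neg_atTop_atBot.comp this
    exact Real.tendsto_exp_atBot.comp h1
  have hxexp : Tendsto (fun x : ℝ => x * Real.exp (-x*s)) atTop (𝓝 0) := by
    have h1 : Tendsto (fun y : ℝ => y * Real.exp (-y)) atTop (𝓝 0) := by
      simpa using Real.tendsto_pow_mul_exp_neg_atTop_nhds_zero 1
    have h2' : Tendsto (fun x : ℝ => s*x) atTop atTop :=
      tendsto_id.const_mul_atTop hspos
    have h3 := (h1.comp h2').const_mul (1/s)
    rw [mul_zero] at h3
    refine h3.congr (fun x => ?_)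
    simp only [Function.comp_def]
    have : -(s*x) = -x*s := by ring
    rw [this]
    field_simp
  have hVx2 : ∀ x, V x = β - β * Real.exp (-x*s)
      - (2/r^2) * E * Real.exp (-x*s) - (2/(r*s)) * E * (x * Real.exp (-x*s))
      + (2/r^2) * E - ((1/r)*E - (1/r)*E*Real.exp (-x*s))^2 := by
    intro x
    rw [hVx x, show (xR - x)*s = xR*s + (-x*s) by ring, Real.exp_add, ← hE]
    field_simp
    ring
  have part2 : Tendsto V atTop (𝓝 a₄) := by
    have key : Tendsto (fun x => β - β * Real.exp (-x*s)
        - (2/r^2) * E * Real.exp (-x*s) - (2/(r*s)) * E * (x * Real.exp (-x*s))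
        + (2/r^2) * E - ((1/r)*E - (1/r)*E*Real.exp (-x*s))^2) atTop
        (𝓝 (β - β * 0 - (2/r^2) * E * 0 - (2/(r*s)) * E * 0
          + (2/r^2) * E - ((1/r)*E - (1/r)*E*0)^2)) := by
      exact ((((tendsto_const_nhds.sub (hexp.const_mul β)).sub
        (hexp.const_mul ((2/r^2)*E))).sub (hxexp.const_mul ((2/(r*s))*E))).add
        tendsto_const_nhds).sub ((tendsto_const_nhds.sub (hexp.const_mul ((1/r)*E))).pow 2)
    have hval : β - β * 0 - (2/r^2) * E * 0 - (2/(r*s)) * E * 0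
        + (2/r^2) * E - ((1/r)*E - (1/r)*E*0)^2 = a₄ := by
      rw [ha4, hE, show 2*xR*s = xR*s + xR*s by ring, Real.exp_add]
      ring
    rw [hval] at key
    exact key.congr (fun x => (hVx2 x).symm)
  exact ⟨part1, part2⟩
end

section
/- Let r > 0, x_R > 0, s = √(2r), and α₁ = (x_R/r)·e^{x_R·s}. If T : ℝ → ℝ is twice continuously differentiable, satisfies (1/2)·T''(x) − r·T(x) = −x − r·α₁ for all x ≥ 0, T(0) = 0 and T(x_R) = α₁, then T(x) = (x_R/r)·e^{x_R·s}·(1 − e^{−x·s}) + x/r for all x ≥ 0. -/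
open Real Set Filter

theorem stmt_7 (r xR s α₁ : ℝ) (hr : 0 < r) (hxR : 0 < xR)
    (hs : s = Real.sqrt (2*r)) (hα : α₁ = (xR/r) * Real.exp (xR*s))
    (T : ℝ → ℝ) (hreg : ContDiff ℝ 2 T)
    (hode : ∀ x : ℝ, 0 ≤ x → (1/2) * deriv (deriv T) x - r * T x = -x - r * α₁)
    (h0 : T 0 = 0) (hxReq : T xR = α₁) :
    ∀ x : ℝ, 0 ≤ x →
      T x = (xR/r) * Real.exp (xR*s) * (1 - Real.exp (-x*s)) + x/r := by
  have hr' : r ≠ 0 := ne_of_gt hr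
  have hs0 : 0 < s := by
    rw [hs]; exact Real.sqrt_pos.2 (by linarith)
  have hs2 : s^2 = 2*r := by
    rw [hs]; exact Real.sq_sqrt (by linarith)
  -- the candidate solution and its derivatives
  set g : ℝ → ℝ := fun x => α₁*(1 - Real.exp (-x*s)) + x/r with hgdef
  set g1 : ℝ → ℝ := fun x => α₁*(s*Real.exp (-x*s)) + 1/r with hg1def
  set g2 : ℝ → ℝ := fun x => -α₁*(s^2*Real.exp (-x*s)) with hg2def
  have hexp : ∀ x : ℝ, HasDerivAt (fun y : ℝ => Real.exp (-y*s))
      (Real.exp (-x*s) * (-1*s)) x := by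
    intro x
    exact ((hasDerivAt_id x).neg.mul_const s).exp
  have hg1 : ∀ x, HasDerivAt g (g1 x) x := by
    intro x
    have h1 : HasDerivAt (fun y : ℝ => α₁*(1 - Real.exp (-y*s)))
        (α₁ * (0 - Real.exp (-x*s) * (-1*s))) x :=
      ((hasDerivAt_const x (1:ℝ)).sub (hexp x)).const_mul α₁
    have h2 : HasDerivAt (fun y : ℝ => y/r) (1/r) x := by
      simpa using (hasDerivAt_id x).div_const r
    have := h1.add h2
    refine this.congr_deriv ?_
    show _ = α₁*(s*Real.exp (-x*s)) + 1/r; ring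
  have hg2 : ∀ x, HasDerivAt g1 (g2 x) x := by
    intro x
    have h1 : HasDerivAt (fun y : ℝ => α₁*(s*Real.exp (-y*s)))
        (α₁ * (s * (Real.exp (-x*s) * (-1*s)))) x :=
      ((hexp x).const_mul s).const_mul α₁
    have := h1.add (hasDerivAt_const x (1/r))
    refine this.congr_deriv ?_
    show _ = -α₁*(s^2*Real.exp (-x*s)); ring
  -- regularity of T
  have hTd : Differentiable ℝ T := hreg.differentiable (by norm_num)
  have hTd2 : Differentiable ℝ (deriv T) := by
    have h2 : ContDiff ℝ (1+1) T := by exact_mod_cast hreg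
    exact ((contDiff_succ_iff_deriv.mp h2).2.2).differentiable one_ne_zero
  have hT' : ∀ x, HasDerivAt T (deriv T x) x := fun x => (hTd x).hasDerivAt
  have hT'' : ∀ x, HasDerivAt (deriv T) (deriv (deriv T) x) x :=
    fun x => (hTd2 x).hasDerivAt
  -- the difference and its derivative
  set D : ℝ → ℝ := fun x => T x - g x with hDdef
  set P : ℝ → ℝ := fun x => deriv T x - g1 x with hPdef
  have hD : ∀ x, HasDerivAt D (P x) x := fun x => (hT' x).sub (hg1 x)
  have hP : ∀ x, HasDerivAt P (deriv (deriv T) x - g2 x) x :=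
    fun x => (hT'' x).sub (hg2 x)
  have key : ∀ x : ℝ, 0 ≤ x → deriv (deriv T) x - g2 x = s^2 * D x := by
    intro x hx
    have h := hode x hx
    have hxr : r * (x/r) = x := by field_simp
    simp only [hDdef, hgdef, hg2def]
    rw [hs2]
    linear_combination 2*h + 2*hxr
  -- the two first-order combinations are constant on [0,∞)
  set F : ℝ → ℝ := fun x => (P x + s * D x) * Real.exp (-x*s) with hFdef
  set G : ℝ → ℝ := fun x => (P x - s * D x) * Real.exp (x*s) with hGdef
  have hexp2 : ∀ x : ℝ, HasDerivAt (fun y : ℝ => Real.exp (y*s))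
      (Real.exp (x*s) * (1*s)) x := by
    intro x
    exact ((hasDerivAt_id x).mul_const s).exp
  have hFat : ∀ x, HasDerivAt F
      ((deriv (deriv T) x - g2 x + s * P x) * Real.exp (-x*s)
        + (P x + s * D x) * (Real.exp (-x*s) * (-1*s))) x := by
    intro x
    exact ((hP x).add ((hD x).const_mul s)).mul (hexp x)
  have hGat : ∀ x, HasDerivAt G
      ((deriv (deriv T) x - g2 x - s * P x) * Real.exp (x*s)
        + (P x - s * D x) * (Real.exp (x*s) * (1*s))) x := by
    intro x
    exact ((hP x).sub ((hD x).const_mul s)).mul (hexp2 x)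
  have hF0 : ∀ x : ℝ, 0 ≤ x → HasDerivAt F 0 x := by
    intro x hx
    have h := hFat x
    have hk := key x hx
    have : (deriv (deriv T) x - g2 x + s * P x) * Real.exp (-x*s)
        + (P x + s * D x) * (Real.exp (-x*s) * (-1*s)) = 0 := by
      rw [hk]; ring
    rwa [this] at h
  have hG0 : ∀ x : ℝ, 0 ≤ x → HasDerivAt G 0 x := by
    intro x hx
    have h := hGat x
    have hk := key x hx
    have : (deriv (deriv T) x - g2 x - s * P x) * Real.exp (x*s)
        + (P x - s * D x) * (Real.exp (x*s) * (1*s)) = 0 := by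
      rw [hk]; ring
    rwa [this] at h
  have hFconst : ∀ b : ℝ, 0 ≤ b → F b = F 0 := by
    intro b hb
    exact constant_of_has_deriv_right_zero
      (fun x _ => (hFat x).continuousAt.continuousWithinAt)
      (fun x hx => (hF0 x hx.1).hasDerivWithinAt) b ⟨hb, le_rfl⟩
  have hGconst : ∀ b : ℝ, 0 ≤ b → G b = G 0 := by
    intro b hb
    exact constant_of_has_deriv_right_zero
      (fun x _ => (hGat x).continuousAt.continuousWithinAt)
      (fun x hx => (hG0 x hx.1).hasDerivWithinAt) b ⟨hb, le_rfl⟩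
  -- boundary values of D
  have hD0 : D 0 = 0 := by
    simp [hDdef, hgdef, h0]
  have hDxR : D xR = 0 := by
    have hee : Real.exp (xR*s) * Real.exp (-xR*s) = 1 := by
      rw [← Real.exp_add]; ring_nf; exact Real.exp_zero
    simp only [hDdef, hgdef, hxReq, hα]
    linear_combination (xR/r) * hee
  -- pin down the constants
  have hF0v : F 0 = P 0 := by simp [hFdef, hD0]
  have hG0v : G 0 = P 0 := by simp [hGdef, hD0]
  have hmain : ∀ x : ℝ, 0 ≤ x → 2 * s * D x = P 0 * (Real.exp (x*s) - Real.exp (-x*s)) := by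
    intro x hx
    have hF := hFconst x hx
    have hG := hGconst x hx
    rw [hF0v] at hF
    rw [hG0v] at hG
    have hepos : Real.exp (-x*s) ≠ 0 := Real.exp_ne_zero _
    have hepos2 : Real.exp (x*s) ≠ 0 := Real.exp_ne_zero _
    have hee : Real.exp (x*s) * Real.exp (-x*s) = 1 := by
      rw [← Real.exp_add]; norm_num
    have hF' : (P x + s * D x) * Real.exp (-x*s) = P 0 := hF
    have hG' : (P x - s * D x) * Real.exp (x*s) = P 0 := hG
    have h1 : P x + s * D x = P 0 * Real.exp (x*s) := by
      linear_combination Real.exp (x*s) * hF' - (P x + s * D x) * hee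
    have h2 : P x - s * D x = P 0 * Real.exp (-x*s) := by
      linear_combination Real.exp (-x*s) * hG' - (P x - s * D x) * hee
    linear_combination h1 - h2
  -- at xR this forces P 0 = 0
  have hP0 : P 0 = 0 := by
    have h := hmain xR (le_of_lt hxR)
    rw [hDxR, mul_zero] at h
    have hlt : Real.exp (-xR*s) < Real.exp (xR*s) := Real.exp_lt_exp.2 (by nlinarith)
    rcases mul_eq_zero.mp h.symm with h' | h'
    · exact h'
    · linarith
  -- conclude
  intro x hx
  have h := hmain x hx
  rw [hP0, zero_mul] at h
  have hDx : D x = 0 := by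
    have hs' : (2:ℝ) * s ≠ 0 := by positivity
    rcases mul_eq_zero.mp h with h' | h'
    · exact absurd h' hs'
    · exact h'
  have hTg : T x = g x := by
    simp only [hDdef] at hDx
    linarith
  rw [hTg]
  simp only [hgdef]
  rw [hα]
end

section
/- Let r > 0, x_R > 0, s = √(2r), α₂ = (2·e^{x_R·s}/r)·((x_R²/r)·(3/4 + e^{x_R·s}) + 1/r² − x_R³/(2s)) − 2/r³, and A₁(x) = (x_R/r)·e^{x_R·s}·(1 − e^{−x·s}) + x/r. Define T(x) = (1 − e^{−x·s})·(α₂ + 2/r³) + (2x/r²)·(x + x_R·e^{x_R·s}) − (x_R·x/r)·(x/s + 1/(2r))·e^{−(x − x_R)·s}. Then: (i) for all x ≥ 0, (1/2)·T''(x) − r·T(x) = −2x·A₁(x) − r·α₂; (ii) T(0) = 0; and (iii) T(x_R) = α₂. -/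
open Real Set Filter

theorem stmt_9 (r xR s α₂ : ℝ) (hr : 0 < r) (hxR : 0 < xR)
    (hs : s = Real.sqrt (2*r))
    (hα2 : α₂ = (2 * Real.exp (xR*s) / r)
      * ((xR^2/r) * (3/4 + Real.exp (xR*s)) + 1/r^2 - xR^3/(2*s)) - 2/r^3)
    (A₁ T : ℝ → ℝ)
    (hA : ∀ x, A₁ x = (xR/r) * Real.exp (xR*s) * (1 - Real.exp (-x*s)) + x/r)
    (hT : ∀ x, T x = (1 - Real.exp (-x*s)) * (α₂ + 2/r^3)
      + (2*x/r^2) * (x + xR * Real.exp (xR*s))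
      - (xR*x/r) * (x/s + 1/(2*r)) * Real.exp (-(x - xR)*s)) :
    (∀ x : ℝ, 0 ≤ x →
      (1/2) * deriv (deriv T) x - r * T x = -2*x * A₁ x - r * α₂)
    ∧ T 0 = 0
    ∧ T xR = α₂ := by
  have hs0 : 0 < s := hs ▸ Real.sqrt_pos.mpr (by linarith)
  have hs2 : s^2 = 2*r := by
    rw [hs]; exact Real.sq_sqrt (by linarith)
  have hr' : r ≠ 0 := ne_of_gt hr
  have hs' : s ≠ 0 := ne_of_gt hs0
  set K := Real.exp (xR*s) with hK
  set C := α₂ + 2/r^3 with hC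
  have hTfun : T = fun x => C - C * Real.exp (-(s*x)) + (2/r^2)*x^2
      + (2*xR*K/r^2)*x - (xR*K/r)*((x^2/s + x/(2*r)) * Real.exp (-(s*x))) := by
    funext x
    rw [hT x]
    have h1 : Real.exp (-(x - xR)*s) = K * Real.exp (-(s*x)) := by
      rw [hK, ← Real.exp_add]; ring_nf
    have h2 : Real.exp (-x*s) = Real.exp (-(s*x)) := by ring_nf
    rw [h1, h2]; ring
  have hE : ∀ x : ℝ, HasDerivAt (fun x => Real.exp (-(s*x)))
      (Real.exp (-(s*x)) * (-s)) x := by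
    intro x
    have h0 : HasDerivAt (fun x : ℝ => -(s*x)) (-s) x := by
      exact ((hasDerivAt_id x).const_mul s).neg.congr_deriv (by ring)
    exact h0.exp
  have hD1 : ∀ x : ℝ, HasDerivAt T
      (C*s*Real.exp (-(s*x)) + (4/r^2)*x + 2*xR*K/r^2
        - (xR*K/r)*((2*x/s + 1/(2*r) - s*(x^2/s + x/(2*r)))*Real.exp (-(s*x)))) x := by
    intro x
    rw [hTfun]
    have hP : HasDerivAt (fun x : ℝ => x^2/s + x/(2*r)) (2*x/s + 1/(2*r)) x := by
      have h1 : HasDerivAt (fun x : ℝ => x^2/s) (2*x/s) x := by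
        simpa [div_eq_mul_inv, mul_comm] using
          ((hasDerivAt_pow 2 x).mul_const s⁻¹)
      have h2 : HasDerivAt (fun x : ℝ => x/(2*r)) (1/(2*r)) x := by
        simpa [div_eq_mul_inv] using (hasDerivAt_id x).mul_const (2*r)⁻¹
      exact h1.add h2
    have hx2 : HasDerivAt (fun x : ℝ => (2/r^2)*x^2) ((2/r^2)*(2*x)) x := by
      simpa using ((hasDerivAt_pow 2 x).const_mul (2/r^2))
    have hlin : HasDerivAt (fun x : ℝ => (2*xR*K/r^2)*x) (2*xR*K/r^2) x := by
      simpa using (hasDerivAt_id x).const_mul (2*xR*K/r^2)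
    have h5 : HasDerivAt (fun x : ℝ => (xR*K/r)*((x^2/s + x/(2*r)) * Real.exp (-(s*x))))
        ((xR*K/r)*((2*x/s + 1/(2*r)) * Real.exp (-(s*x))
          + (x^2/s + x/(2*r)) * (Real.exp (-(s*x)) * (-s)))) x :=
      (hP.mul (hE x)).const_mul (xR*K/r)
    have := ((((hasDerivAt_const x C).sub ((hE x).const_mul C)).add hx2).add hlin).sub h5
    exact this.congr_deriv (by ring)
  have hderivT : deriv T = fun x => C*s*Real.exp (-(s*x)) + (4/r^2)*x + 2*xR*K/r^2
      - (xR*K/r)*((2*x/s + 1/(2*r) - s*(x^2/s + x/(2*r)))*Real.exp (-(s*x))) := by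
    funext x; exact (hD1 x).deriv
  have hD2 : ∀ x : ℝ, HasDerivAt (deriv T)
      (C*s*(Real.exp (-(s*x))*(-s)) + 4/r^2
        - (xR*K/r)*((2/s - s*(2*x/s + 1/(2*r)))*Real.exp (-(s*x))
          + (2*x/s + 1/(2*r) - s*(x^2/s + x/(2*r)))*(Real.exp (-(s*x))*(-s)))) x := by
    intro x
    rw [hderivT]
    have hQ : HasDerivAt (fun x : ℝ => 2*x/s + 1/(2*r) - s*(x^2/s + x/(2*r)))
        (2/s - s*(2*x/s + 1/(2*r))) x := by
      have h1 : HasDerivAt (fun x : ℝ => 2*x/s) (2/s) x := by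
        simpa [div_eq_mul_inv, mul_comm, mul_assoc] using
          ((hasDerivAt_id x).const_mul 2).mul_const s⁻¹
      have hP : HasDerivAt (fun x : ℝ => x^2/s + x/(2*r)) (2*x/s + 1/(2*r)) x := by
        have h1' : HasDerivAt (fun x : ℝ => x^2/s) (2*x/s) x := by
          simpa [div_eq_mul_inv, mul_comm] using
            ((hasDerivAt_pow 2 x).mul_const s⁻¹)
        have h2' : HasDerivAt (fun x : ℝ => x/(2*r)) (1/(2*r)) x := by
          simpa [div_eq_mul_inv] using (hasDerivAt_id x).mul_const (2*r)⁻¹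
        exact h1'.add h2'
      exact ((h1.add (hasDerivAt_const x (1/(2*r)))).sub (hP.const_mul s)).congr_deriv (by ring)
    have h1 : HasDerivAt (fun x : ℝ => C*s*Real.exp (-(s*x)))
        (C*s*(Real.exp (-(s*x))*(-s))) x := by
      simpa [mul_comm, mul_assoc] using (hE x).const_mul (C*s)
    have h2 : HasDerivAt (fun x : ℝ => (4/r^2)*x) (4/r^2) x := by
      simpa using (hasDerivAt_id x).const_mul (4/r^2)
    have h5 : HasDerivAt (fun x : ℝ =>
        (xR*K/r)*((2*x/s + 1/(2*r) - s*(x^2/s + x/(2*r)))*Real.exp (-(s*x))))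
        ((xR*K/r)*((2/s - s*(2*x/s + 1/(2*r)))*Real.exp (-(s*x))
          + (2*x/s + 1/(2*r) - s*(x^2/s + x/(2*r)))*(Real.exp (-(s*x))*(-s)))) x :=
      (hQ.mul (hE x)).const_mul (xR*K/r)
    have := ((h1.add h2).add (hasDerivAt_const x (2*xR*K/r^2))).sub h5
    exact this.congr_deriv (by ring)
  refine ⟨?_, ?_, ?_⟩
  · intro x _
    rw [(hD2 x).deriv]
    simp only [hTfun, hA x]
    have h2 : Real.exp (-x*s) = Real.exp (-(s*x)) := by ring_nf
    rw [h2]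
    have hrs : r = s^2/2 := by linarith
    rw [hC, hrs]
    field_simp
    ring
  · simp only [hTfun]; norm_num
  · simp only [hTfun]
    have hEi : Real.exp (-(s*xR)) = K⁻¹ := by
      rw [hK, ← Real.exp_neg]; ring_nf
    rw [hEi, hC, hα2]
    have hK0 : K ≠ 0 := Real.exp_ne_zero _
    have hrs : r = s^2/2 := by linarith
    rw [hrs]
    field_simp
    ring
end

section
/- Let r > 0, x_R > 0, s = √(2r), α₂ = (2·e^{x_R·s}/r)·((x_R²/r)·(3/4 + e^{x_R·s}) + 1/r² − x_R³/(2s)) − 2/r³, A₁(x) = (x_R/r)·e^{x_R·s}·(1 − e^{−x·s}) + x/r, and T(x) = (1 − e^{−x·s})·(α₂ + 2/r³) + (2x/r²)·(x + x_R·e^{x_R·s}) − (x_R·x/r)·(x/s + 1/(2r))·e^{−(x − x_R)·s}. Then T(x)/x² → 2/r² and (T(x) − A₁(x)²)/x² → 1/r² as x → +∞; moreover (T(x) − c·x)/x → 0 as x → 0⁺, where c = s·(α₂ + 2/r³) + (3x_R/(2r²))·e^{x_R·s}. -/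
open Real Set Filter

theorem stmt_10 (r xR s α₂ c : ℝ) (hr : 0 < r) (hxR : 0 < xR)
    (hs : s = Real.sqrt (2*r))
    (hα2 : α₂ = (2 * Real.exp (xR*s) / r)
      * ((xR^2/r) * (3/4 + Real.exp (xR*s)) + 1/r^2 - xR^3/(2*s)) - 2/r^3)
    (A₁ T : ℝ → ℝ)
    (hA : ∀ x, A₁ x = (xR/r) * Real.exp (xR*s) * (1 - Real.exp (-x*s)) + x/r)
    (hT : ∀ x, T x = (1 - Real.exp (-x*s)) * (α₂ + 2/r^3)
      + (2*x/r^2) * (x + xR * Real.exp (xR*s))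
      - (xR*x/r) * (x/s + 1/(2*r)) * Real.exp (-(x - xR)*s))
    (hc : c = s * (α₂ + 2/r^3) + (3*xR/(2*r^2)) * Real.exp (xR*s)) :
    Filter.Tendsto (fun x => T x / x^2) Filter.atTop (nhds (2/r^2))
    ∧ Filter.Tendsto (fun x => (T x - (A₁ x)^2) / x^2) Filter.atTop (nhds (1/r^2))
    ∧ Filter.Tendsto (fun x => (T x - c * x) / x) (nhdsWithin 0 (Set.Ioi 0)) (nhds 0) := by
  have hs0 : 0 < s := by rw [hs]; exact Real.sqrt_pos.mpr (by positivity)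
  have hrne : r ≠ 0 := hr.ne'
  have hsne : s ≠ 0 := hs0.ne'
  set K := α₂ + 2/r^3 with hK
  set E := Real.exp (xR*s) with hE
  have hexp : ∀ x : ℝ, Real.exp (-(x - xR)*s) = E * Real.exp (-x*s) := by
    intro x
    rw [hE, ← Real.exp_add]
    congr 1
    ring
  -- exp(-x*s) → 0 at top
  have he : Tendsto (fun x : ℝ => Real.exp (-x*s)) atTop (nhds 0) := by
    apply Real.tendsto_exp_atBot.comp
    have : Tendsto (fun x : ℝ => x * s) atTop atTop :=
      Tendsto.atTop_mul_const hs0 tendsto_id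
    have h2 := tendsto_neg_atTop_atBot.comp this
    simp only [Function.comp_def] at h2
    simpa [neg_mul] using h2
  have hi : Tendsto (fun x : ℝ => x⁻¹) atTop (nhds 0) := tendsto_inv_atTop_zero
  -- Limit 1
  have h1 : Tendsto (fun x => T x / x^2) atTop (nhds (2/r^2)) := by
    have hF : Continuous (fun p : ℝ × ℝ =>
        K*p.2^2 - K*p.1*p.2^2 + 2/r^2 + 2*(xR*E)/r^2*p.2
          - xR*E/r*(p.1/s + p.1*p.2/(2*r))) := by fun_prop
    have hcomp : Tendsto (fun x : ℝ =>
        K*(x⁻¹)^2 - K*(Real.exp (-x*s))*(x⁻¹)^2 + 2/r^2 + 2*(xR*E)/r^2*x⁻¹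
          - xR*E/r*((Real.exp (-x*s))/s + (Real.exp (-x*s))*x⁻¹/(2*r)))
        atTop (nhds (2/r^2)) := by
      have key := (hF.tendsto ((0:ℝ), (0:ℝ))).comp (he.prodMk_nhds hi)
      simp only [Function.comp_def] at key
      convert key using 2
      norm_num
    refine hcomp.congr' ?_
    filter_upwards [eventually_ge_atTop (1:ℝ)] with x hx
    have hxne : x ≠ 0 := by linarith
    rw [hT x, hexp x]
    field_simp
    ring
  -- A₁² / x² → 1/r²
  have h2 : Tendsto (fun x => (A₁ x)^2 / x^2) atTop (nhds (1/r^2)) := by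
    have hF : Continuous (fun p : ℝ × ℝ => xR*E/r*p.2 - xR*E/r*p.1*p.2 + 1/r) := by
      fun_prop
    have hbase : Tendsto (fun x : ℝ =>
        xR*E/r*x⁻¹ - xR*E/r*(Real.exp (-x*s))*x⁻¹ + 1/r) atTop (nhds (1/r)) := by
      have key := (hF.tendsto ((0:ℝ), (0:ℝ))).comp (he.prodMk_nhds hi)
      simp only [Function.comp_def] at key
      convert key using 2
      norm_num
    have hsq := hbase.pow 2
    have heq : (1/r)^2 = 1/r^2 := by field_simp
    rw [heq] at hsq
    refine hsq.congr' ?_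
    filter_upwards [eventually_ge_atTop (1:ℝ)] with x hx
    have hxne : x ≠ 0 := by linarith
    rw [hA x]
    field_simp
  refine ⟨h1, ?_, ?_⟩
  · have := h1.sub h2
    have heq : (2:ℝ)/r^2 - 1/r^2 = 1/r^2 := by ring
    rw [heq] at this
    refine this.congr ?_
    intro x
    rw [sub_div]
  · -- limit at 0⁺
    have hd : HasDerivAt (fun x : ℝ => 1 - Real.exp (-x*s)) s 0 := by
      have h1 : HasDerivAt (fun x : ℝ => -x*s) (-s) 0 := by
        simpa using ((hasDerivAt_id (0:ℝ)).neg.mul_const s)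
      have h2 := h1.exp
      have h3 := h2.const_sub 1
      simpa using h3
    have hw : Tendsto (fun x : ℝ => (1 - Real.exp (-x*s))/x)
        (nhdsWithin 0 (Set.Ioi 0)) (nhds s) := by
      rw [hasDerivAt_iff_tendsto_slope] at hd
      have hmono : nhdsWithin (0:ℝ) (Set.Ioi 0) ≤ nhdsWithin 0 {(0:ℝ)}ᶜ :=
        nhdsWithin_mono _ (fun x hx => ne_of_gt hx)
      refine (hd.mono_left hmono).congr' ?_
      filter_upwards [self_mem_nhdsWithin] with x hx
      simp [slope_def_field]
    have hu0 : Tendsto (fun x : ℝ => Real.exp (-x*s))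
        (nhdsWithin 0 (Set.Ioi 0)) (nhds 1) := by
      have : Tendsto (fun x : ℝ => Real.exp (-x*s)) (nhds 0) (nhds 1) := by
        have hc : Continuous (fun x : ℝ => Real.exp (-x*s)) := by fun_prop
        simpa using hc.tendsto 0
      exact this.mono_left nhdsWithin_le_nhds
    have hx0 : Tendsto (fun x : ℝ => x) (nhdsWithin 0 (Set.Ioi 0)) (nhds 0) :=
      tendsto_id.mono_left nhdsWithin_le_nhds
    have hG : Continuous (fun p : ℝ × ℝ × ℝ =>
        K*p.1 + 2/r^2*p.2.2 + 2*xR*E/r^2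
          - xR*E/r*(p.2.2/s + 1/(2*r))*p.2.1 - c) := by fun_prop
    have hcomp : Tendsto (fun x : ℝ =>
        K*((1 - Real.exp (-x*s))/x) + 2/r^2*x + 2*xR*E/r^2
          - xR*E/r*(x/s + 1/(2*r))*(Real.exp (-x*s)) - c)
        (nhdsWithin 0 (Set.Ioi 0)) (nhds 0) := by
      have key := (hG.tendsto ((s:ℝ), (1:ℝ), (0:ℝ))).comp
        (hw.prodMk_nhds (hu0.prodMk_nhds hx0))
      simp only [Function.comp_def] at key
      convert key using 2
      rw [hc]
      field_simp
      ring
    refine hcomp.congr' ?_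
    filter_upwards [self_mem_nhdsWithin] with x hx
    have hxne : x ≠ 0 := ne_of_gt hx
    rw [hT x, hexp x]
    field_simp
    ring
end

section
/- Let r > 0, x_R > 0, s = √(2r), T₁(x) = (1/r)·e^{x_R·s}·(1 − e^{−x·s}), A₁(x) = (x_R/r)·e^{x_R·s}·(1 − e^{−x·s}) + x/r, and V_R = e^{x_R·s}·((8·e^{x_R·s} − 1)·x_R/(4r²) − 3x_R²/(2r·s)). Define V(x) = −(x_R·e^{x_R·s}/r² + V_R)·e^{−x·s} + (e^{x_R·s} + 1)·x/r² + x_R·e^{x_R·s}/r² − e^{−(x − x_R)·s}·(x²/(2r·s) + (1 + 2x_R·s)·x/(4r²)) + V_R. Then: (i) for all x ≥ 0, (1/2)·V''(x) − r·V(x) = −x·T₁(x) − A₁(x) − r·V_R; (ii) V(0) = 0; (iii) V(x_R) = V_R; and (iv) there is a constant C > 0 such that V(x) ≤ C·x for all sufficiently large x. -/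
open Real Set Filter

set_option maxHeartbeats 2000000 in
theorem stmt_11 (r xR s VR : ℝ) (hr : 0 < r) (hxR : 0 < xR)
    (hs : s = Real.sqrt (2*r))
    (hVR : VR = Real.exp (xR*s)
      * ((8 * Real.exp (xR*s) - 1) * xR / (4*r^2) - 3*xR^2/(2*r*s)))
    (T₁ A₁ V : ℝ → ℝ)
    (hT1 : ∀ x, T₁ x = (1/r) * Real.exp (xR*s) * (1 - Real.exp (-x*s)))
    (hA1 : ∀ x, A₁ x = (xR/r) * Real.exp (xR*s) * (1 - Real.exp (-x*s)) + x/r)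
    (hV : ∀ x, V x = -(xR * Real.exp (xR*s) / r^2 + VR) * Real.exp (-x*s)
      + (Real.exp (xR*s) + 1) * x / r^2
      + xR * Real.exp (xR*s) / r^2
      - Real.exp (-(x - xR)*s) * (x^2/(2*r*s) + (1 + 2*xR*s) * x / (4*r^2))
      + VR) :
    (∀ x : ℝ, 0 ≤ x →
      (1/2) * deriv (deriv V) x - r * V x = -x * T₁ x - A₁ x - r * VR)
    ∧ V 0 = 0
    ∧ V xR = VR
    ∧ (∃ C > (0:ℝ), ∃ x₀ : ℝ, ∀ x ≥ x₀, V x ≤ C * x) := by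
  have h2r : (0:ℝ) < 2*r := by linarith
  have hs0 : 0 < s := by rw [hs]; exact Real.sqrt_pos.mpr h2r
  have hs2 : s^2 = 2*r := by rw [hs]; exact Real.sq_sqrt h2r.le
  have hrr : r = s^2/2 := by linarith
  have hr0 : r ≠ 0 := hr.ne'
  have hE0 : Real.exp (xR*s) ≠ 0 := (Real.exp_pos _).ne'
  -- derivative computations
  have hVf : V = fun x => -(xR * Real.exp (xR*s) / r^2 + VR) * Real.exp (-x*s)
      + (Real.exp (xR*s) + 1) * x / r^2
      + xR * Real.exp (xR*s) / r^2
      - Real.exp (-(x - xR)*s) * (x^2/(2*r*s) + (1 + 2*xR*s) * x / (4*r^2))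
      + VR := funext hV
  have e1 : ∀ x : ℝ, HasDerivAt (fun x : ℝ => Real.exp (-x*s)) (-s * Real.exp (-x*s)) x := by
    intro x
    have h : HasDerivAt (fun x : ℝ => -x*s) (-s) x := by
      simpa using ((hasDerivAt_id x).neg.mul_const s)
    simpa [mul_comm] using h.exp
  have e2 : ∀ x : ℝ, HasDerivAt (fun x : ℝ => Real.exp (-(x-xR)*s)) (-s * Real.exp (-(x-xR)*s)) x := by
    intro x
    have h : HasDerivAt (fun x : ℝ => -(x-xR)*s) (-s) x := by
      simpa using (((hasDerivAt_id x).sub_const xR).neg.mul_const s)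
    simpa [mul_comm] using h.exp
  have e3 : ∀ x : ℝ, HasDerivAt (fun x : ℝ => x^2/(2*r*s) + (1 + 2*xR*s) * x / (4*r^2))
      (2*x/(2*r*s) + (1 + 2*xR*s)/(4*r^2)) x := by
    intro x
    have h1 : HasDerivAt (fun x : ℝ => x^2/(2*r*s)) (2*x/(2*r*s)) x := by
      simpa using (hasDerivAt_pow 2 x).div_const (2*r*s)
    have h2 : HasDerivAt (fun x : ℝ => (1 + 2*xR*s) * x / (4*r^2))
        ((1 + 2*xR*s)/(4*r^2)) x := by
      have := ((hasDerivAt_id x).const_mul (1 + 2*xR*s)).div_const (4*r^2)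
      simpa using this
    exact h1.add h2
  have key1 : ∀ x : ℝ, HasDerivAt V
      (-(xR * Real.exp (xR*s) / r^2 + VR) * (-s * Real.exp (-x*s))
        + (Real.exp (xR*s) + 1) / r^2
        - ((-s * Real.exp (-(x-xR)*s)) * (x^2/(2*r*s) + (1 + 2*xR*s) * x / (4*r^2))
           + Real.exp (-(x-xR)*s) * (2*x/(2*r*s) + (1 + 2*xR*s)/(4*r^2)))) x := by
    intro x
    rw [hVf]
    have hb : HasDerivAt (fun x : ℝ => (Real.exp (xR*s) + 1) * x / r^2)
        ((Real.exp (xR*s) + 1) / r^2) x := by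
      have := ((hasDerivAt_id x).const_mul (Real.exp (xR*s) + 1)).div_const (r^2)
      simpa using this
    exact (((((e1 x).const_mul (-(xR * Real.exp (xR*s) / r^2 + VR))).add hb).add_const
      (xR * Real.exp (xR*s) / r^2)).sub ((e2 x).mul (e3 x))).add_const VR
  have hd1 : deriv V = fun x =>
      -(xR * Real.exp (xR*s) / r^2 + VR) * (-s * Real.exp (-x*s))
        + (Real.exp (xR*s) + 1) / r^2
        - ((-s * Real.exp (-(x-xR)*s)) * (x^2/(2*r*s) + (1 + 2*xR*s) * x / (4*r^2))
           + Real.exp (-(x-xR)*s) * (2*x/(2*r*s) + (1 + 2*xR*s)/(4*r^2))) :=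
    funext fun x => (key1 x).deriv
  have key2 : ∀ x : ℝ, HasDerivAt (deriv V)
      (-(xR * Real.exp (xR*s) / r^2 + VR) * (-s * (-s * Real.exp (-x*s)))
        - (((-s) * (-s * Real.exp (-(x-xR)*s))) * (x^2/(2*r*s) + (1 + 2*xR*s) * x / (4*r^2))
           + (-s * Real.exp (-(x-xR)*s)) * (2*x/(2*r*s) + (1 + 2*xR*s)/(4*r^2))
           + ((-s * Real.exp (-(x-xR)*s)) * (2*x/(2*r*s) + (1 + 2*xR*s)/(4*r^2))
              + Real.exp (-(x-xR)*s) * (2/(2*r*s))))) x := by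
    intro x
    rw [hd1]
    have h2x : HasDerivAt (fun x : ℝ => 2*x/(2*r*s) + (1 + 2*xR*s)/(4*r^2)) (2/(2*r*s)) x := by
      have := (((hasDerivAt_id x).const_mul 2).div_const (2*r*s)).add_const ((1 + 2*xR*s)/(4*r^2))
      simpa using this
    have hc : HasDerivAt (fun x : ℝ =>
        -(xR * Real.exp (xR*s) / r^2 + VR) * (-s * Real.exp (-x*s)))
        (-(xR * Real.exp (xR*s) / r^2 + VR) * (-s * (-s * Real.exp (-x*s)))) x := by
      exact ((e1 x).const_mul (-s)).const_mul (-(xR * Real.exp (xR*s) / r^2 + VR))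
    have hm : HasDerivAt (fun x : ℝ =>
        (-s * Real.exp (-(x-xR)*s)) * (x^2/(2*r*s) + (1 + 2*xR*s) * x / (4*r^2))
          + Real.exp (-(x-xR)*s) * (2*x/(2*r*s) + (1 + 2*xR*s)/(4*r^2)))
        (((-s) * (-s * Real.exp (-(x-xR)*s))) * (x^2/(2*r*s) + (1 + 2*xR*s) * x / (4*r^2))
           + (-s * Real.exp (-(x-xR)*s)) * (2*x/(2*r*s) + (1 + 2*xR*s)/(4*r^2))
           + ((-s * Real.exp (-(x-xR)*s)) * (2*x/(2*r*s) + (1 + 2*xR*s)/(4*r^2))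
              + Real.exp (-(x-xR)*s) * (2/(2*r*s)))) x := by
      exact (((e2 x).const_mul (-s)).mul (e3 x)).add ((e2 x).mul h2x)
    exact (hc.add_const ((Real.exp (xR*s) + 1) / r^2)).sub hm
  refine ⟨?_, ?_, ?_, ?_⟩
  · intro x _
    rw [(key2 x).deriv, hT1, hA1, hV]
    have hsplit : Real.exp (-(x - xR)*s) = Real.exp (-x*s) * Real.exp (xR*s) := by
      rw [← Real.exp_add]; ring_nf
    rw [hsplit, hrr]
    have hs0' : s ≠ 0 := hs0.ne'
    field_simp
    ring
  · rw [hV]; norm_num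
  · rw [hV, hVR]
    have h1 : Real.exp (-(xR - xR)*s) = 1 := by norm_num
    have h2 : Real.exp (-xR*s) = (Real.exp (xR*s))⁻¹ := by
      rw [← Real.exp_neg]; ring_nf
    rw [h1, h2, hrr]
    have hs0' : s ≠ 0 := hs0.ne'
    field_simp
    ring
  · set K := xR * Real.exp (xR*s) / r^2 with hK
    set b := (Real.exp (xR*s) + 1) / r^2 with hb
    refine ⟨b + 1, by positivity, |K + VR| + |K| + |VR| + 1, ?_⟩
    intro x hx
    have hM0 : (0:ℝ) ≤ |K + VR| + |K| + |VR| := by positivity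
    have hx0 : (0:ℝ) ≤ x := by
      have := abs_nonneg (K + VR); linarith
    rw [hV]
    have h1 : -(K + VR) * Real.exp (-x*s) ≤ |K + VR| := by
      have he1 : Real.exp (-x*s) ≤ 1 := Real.exp_le_one_iff.mpr (by nlinarith)
      have he0 : (0:ℝ) ≤ Real.exp (-x*s) := (Real.exp_pos _).le
      calc -(K + VR) * Real.exp (-x*s) ≤ |(K + VR)| * Real.exp (-x*s) := by
            apply mul_le_mul_of_nonneg_right _ he0
            rw [abs_eq_max_neg]; exact le_max_right _ _
        _ ≤ |K + VR| * 1 := by exact mul_le_mul_of_nonneg_left he1 (abs_nonneg _)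
        _ = |K + VR| := mul_one _
    have h2 : (0:ℝ) ≤ Real.exp (-(x - xR)*s) * (x^2/(2*r*s) + (1 + 2*xR*s) * x / (4*r^2)) := by
      apply mul_nonneg (Real.exp_pos _).le
      apply add_nonneg (div_nonneg (sq_nonneg x) (by positivity))
      apply div_nonneg _ (by positivity)
      apply mul_nonneg _ hx0
      nlinarith
    have hKabs : K ≤ |K| := le_abs_self K
    have hVabs : VR ≤ |VR| := le_abs_self VR
    have hbx : (Real.exp (xR*s) + 1) * x / r^2 = b * x := by rw [hb]; ring
    nlinarith [h1, h2]
end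

section
/- Let r > 0, x_R > 0, z > 0, s = √(2r), and set c₁ = 1/((e^{z·s} − 1)·(e^{−z·s} + e^{−2x_R·s})), c₂ = −e^{−2x_R·s}·c₁, a = 1 − c₁ − c₂. Define w(y) = c₁·e^{−y·s} + c₂·e^{y·s} + a. Then: (i) for all y, (1/2)·w''(y) − r·w(y) + r·w(x_R) = 0; (ii) w(0) = 1; (iii) w(z) = 0; and (iv) w(x_R) = a. -/
open Real Set Filter

theorem stmt_12 (r xR z s c₁ c₂ a : ℝ) (hr : 0 < r) (hxR : 0 < xR) (hz : 0 < z)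
    (hs : s = Real.sqrt (2*r))
    (hc1 : c₁ = 1 / ((Real.exp (z*s) - 1) * (Real.exp (-z*s) + Real.exp (-2*xR*s))))
    (hc2 : c₂ = -Real.exp (-2*xR*s) * c₁)
    (ha : a = 1 - c₁ - c₂)
    (w : ℝ → ℝ)
    (hw : ∀ y, w y = c₁ * Real.exp (-y*s) + c₂ * Real.exp (y*s) + a) :
    (∀ y : ℝ, (1/2) * deriv (deriv w) y - r * w y + r * w xR = 0)
    ∧ w 0 = 1
    ∧ w z = 0
    ∧ w xR = a := by
  have hs0 : 0 < s := hs ▸ Real.sqrt_pos.mpr (by linarith)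
  have hs2 : s * s = 2 * r := by
    rw [hs]; exact Real.mul_self_sqrt (by linarith)
  have hwe : w = fun y => c₁ * Real.exp (-y*s) + c₂ * Real.exp (y*s) + a := funext hw
  subst hwe
  -- w(xR) = a
  have hwxR : (fun y => c₁ * Real.exp (-y*s) + c₂ * Real.exp (y*s) + a) xR = a := by
    simp only [hc2]
    have : Real.exp (-xR*s) = Real.exp (-2*xR*s) * Real.exp (xR*s) := by
      rw [← Real.exp_add]; ring_nf
    rw [this]; ring
  -- derivatives
  have h1 : ∀ y : ℝ, HasDerivAt (fun y => c₁ * Real.exp (-y*s) + c₂ * Real.exp (y*s) + a)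
      (c₁ * (-s * Real.exp (-y*s)) + c₂ * (s * Real.exp (y*s))) y := by
    intro y
    have e1 : HasDerivAt (fun y : ℝ => -y*s) (-s) y := by
      simpa using ((hasDerivAt_id y).neg.mul_const s)
    have e2 : HasDerivAt (fun y : ℝ => y*s) s y := by
      simpa using ((hasDerivAt_id y).mul_const s)
    have f1 : HasDerivAt (fun y : ℝ => Real.exp (-y*s)) (Real.exp (-y*s) * (-s)) y :=
      HasDerivAt.comp (h₂ := Real.exp) y (Real.hasDerivAt_exp (-y*s)) e1
    have f2 : HasDerivAt (fun y : ℝ => Real.exp (y*s)) (Real.exp (y*s) * s) y :=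
      HasDerivAt.comp (h₂ := Real.exp) y (Real.hasDerivAt_exp (y*s)) e2
    have := ((f1.const_mul c₁).add (f2.const_mul c₂)).add_const a
    exact this.congr_deriv (by ring)
  have hd1 : deriv (fun y => c₁ * Real.exp (-y*s) + c₂ * Real.exp (y*s) + a)
      = fun y => c₁ * (-s * Real.exp (-y*s)) + c₂ * (s * Real.exp (y*s)) :=
    funext fun y => (h1 y).deriv
  have h2 : ∀ y : ℝ, HasDerivAt (fun y => c₁ * (-s * Real.exp (-y*s)) + c₂ * (s * Real.exp (y*s)))
      (c₁ * (s * s * Real.exp (-y*s)) + c₂ * (s * s * Real.exp (y*s))) y := by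
    intro y
    have e1 : HasDerivAt (fun y : ℝ => -y*s) (-s) y := by
      simpa using ((hasDerivAt_id y).neg.mul_const s)
    have e2 : HasDerivAt (fun y : ℝ => y*s) s y := by
      simpa using ((hasDerivAt_id y).mul_const s)
    have f1 : HasDerivAt (fun y : ℝ => Real.exp (-y*s)) (Real.exp (-y*s) * (-s)) y :=
      HasDerivAt.comp (h₂ := Real.exp) y (Real.hasDerivAt_exp (-y*s)) e1
    have f2 : HasDerivAt (fun y : ℝ => Real.exp (y*s)) (Real.exp (y*s) * s) y :=
      HasDerivAt.comp (h₂ := Real.exp) y (Real.hasDerivAt_exp (y*s)) e2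
    have g1 : HasDerivAt (fun y : ℝ => c₁ * (-s * Real.exp (-y*s)))
        (c₁ * (-s * (Real.exp (-y*s) * (-s)))) y := by
      simpa [mul_assoc] using ((f1.const_mul (-s)).const_mul c₁)
    have g2 : HasDerivAt (fun y : ℝ => c₂ * (s * Real.exp (y*s)))
        (c₂ * (s * (Real.exp (y*s) * s))) y := by
      simpa [mul_assoc] using ((f2.const_mul s).const_mul c₂)
    have := g1.add g2
    exact this.congr_deriv (by ring)
  refine ⟨?_, ?_, ?_, hwxR⟩
  · intro y
    rw [hd1, (h2 y).deriv, hwxR]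
    simp only
    rw [show s * s * Real.exp (-y*s) = 2*r*Real.exp (-y*s) by rw [hs2],
        show s * s * Real.exp (y*s) = 2*r*Real.exp (y*s) by rw [hs2]]
    ring
  · simp [ha]
  · -- w z = 0
    have h1 : 1 < Real.exp (z*s) := Real.one_lt_exp_iff.mpr (by positivity)
    have hden : (Real.exp (z*s) - 1) * (Real.exp (-z*s) + Real.exp (-2*xR*s)) ≠ 0 := by
      have h2 : 0 < Real.exp (-z*s) + Real.exp (-2*xR*s) := by positivity
      nlinarith
    have hc1D : c₁ * ((Real.exp (z*s) - 1) * (Real.exp (-z*s) + Real.exp (-2*xR*s))) = 1 := by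
      rw [hc1, one_div, inv_mul_cancel₀ hden]
    have hEE : Real.exp (-z*s) * Real.exp (z*s) = 1 := by
      rw [← Real.exp_add]; simp
    show c₁ * Real.exp (-z*s) + c₂ * Real.exp (z*s) + a = 0
    linear_combination ha + (Real.exp (z*s) - 1) * hc2 - hc1D + c₁ * hEE
end

section
/- Let r > 0, z > 0, 0 < x_R < z, and s = √(2r). If w : ℝ → ℝ is twice continuously differentiable on [0, z] and satisfies (1/2)·w''(y) − r·w(y) + r·w(x_R) = 0 for all y ∈ [0, z], w(0) = 1 and w(z) = 0, then w(y) = c₁·e^{−y·s} + c₂·e^{y·s} + a for all y ∈ [0, z], where c₁ = 1/((e^{z·s} − 1)·(e^{−z·s} + e^{−2x_R·s})), c₂ = −e^{−2x_R·s}·c₁, and a = 1 − c₁ − c₂. -/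
open Real Set Filter

set_option maxHeartbeats 1000000 in
theorem stmt_13 (r xR z s : ℝ) (hr : 0 < r) (hz : 0 < z)
    (hxR : 0 < xR) (hxRz : xR < z)
    (hs : s = Real.sqrt (2*r))
    (w : ℝ → ℝ)
    (hreg : ContDiffOn ℝ 2 w (Set.Icc 0 z))
    (hode : ∀ y ∈ Set.Icc (0:ℝ) z,
      (1/2) * iteratedDerivWithin 2 w (Set.Icc 0 z) y - r * w y + r * w xR = 0)
    (h0 : w 0 = 1) (hz0 : w z = 0) :
    ∀ y ∈ Set.Icc (0:ℝ) z,
      w y = (1 / ((Real.exp (z*s) - 1) * (Real.exp (-z*s) + Real.exp (-2*xR*s))))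
              * Real.exp (-y*s)
          + (-Real.exp (-2*xR*s)
              * (1 / ((Real.exp (z*s) - 1) * (Real.exp (-z*s) + Real.exp (-2*xR*s)))))
              * Real.exp (y*s)
          + (1 - (1 / ((Real.exp (z*s) - 1) * (Real.exp (-z*s) + Real.exp (-2*xR*s))))
              - (-Real.exp (-2*xR*s)
                * (1 / ((Real.exp (z*s) - 1) * (Real.exp (-z*s) + Real.exp (-2*xR*s)))))) := by
  have h2r : (0:ℝ) < 2*r := by linarith
  have hs0 : 0 < s := by rw [hs]; exact Real.sqrt_pos.mpr h2r
  have hs2 : s^2 = 2*r := by rw [hs]; exact Real.sq_sqrt h2r.le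
  have hud : UniqueDiffOn ℝ (Icc (0:ℝ) z) := uniqueDiffOn_Icc hz
  set Kc := w xR with hKc
  set w1 := derivWithin w (Icc (0:ℝ) z) with hw1def
  have hw1reg : ContDiffOn ℝ 1 w1 (Icc 0 z) := hreg.derivWithin hud (by norm_num)
  have hdw : ∀ t ∈ Icc (0:ℝ) z, HasDerivWithinAt w (w1 t) (Icc 0 z) t := by
    intro t ht
    exact ((hreg.differentiableOn (by norm_num)) t ht).hasDerivWithinAt
  have hdw1 : ∀ t ∈ Icc (0:ℝ) z,
      HasDerivWithinAt w1 (2*r*(w t) - 2*r*Kc) (Icc 0 z) t := by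
    intro t ht
    have hdiff : DifferentiableWithinAt ℝ w1 (Icc 0 z) t :=
      (hw1reg.differentiableOn one_ne_zero) t ht
    have h2 : iteratedDerivWithin 2 w (Icc 0 z) t = derivWithin w1 (Icc 0 z) t := by
      rw [iteratedDerivWithin_succ', iteratedDerivWithin_one]
    have hval : derivWithin w1 (Icc 0 z) t = 2*r*(w t) - 2*r*Kc := by
      have := hode t ht
      rw [h2] at this; linarith
    exact hval ▸ hdiff.hasDerivWithinAt
  -- explicit solution constants
  set D := w1 0 with hD
  obtain ⟨A, hA⟩ : ∃ A : ℝ, A = ((1-Kc) - D/s)/2 := ⟨_, rfl⟩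
  obtain ⟨B, hB⟩ : ∃ B : ℝ, B = ((1-Kc) + D/s)/2 := ⟨_, rfl⟩
  have e0 : A + B + Kc = 1 := by rw [hA, hB]; field_simp; ring
  -- ODE uniqueness in ℝ × ℝ
  set v : ℝ → ℝ × ℝ → ℝ × ℝ := fun _ p => (p.2, 2*r*p.1 - 2*r*Kc) with hv_def
  have hL : ∀ t, LipschitzWith ⟨1+2*r, by positivity⟩ (v t) := by
    intro t
    apply LipschitzWith.of_dist_le_mul
    intro p q
    have h1 : dist (v t p) (v t q) = max (dist p.2 q.2) (dist (2*r*p.1 - 2*r*Kc) (2*r*q.1 - 2*r*Kc)) := by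
      rw [Prod.dist_eq]
    rw [h1, Prod.dist_eq]
    change _ ≤ (1+2*r) * _
    simp only [Real.dist_eq]
    have h2 : |2*r*p.1 - 2*r*Kc - (2*r*q.1 - 2*r*Kc)| = 2*r*|p.1 - q.1| := by
      rw [show 2*r*p.1 - 2*r*Kc - (2*r*q.1 - 2*r*Kc) = 2*r*(p.1-q.1) by ring,
        abs_mul, abs_of_pos h2r]
    rw [h2]
    have l1 := le_max_left |p.1 - q.1| |p.2 - q.2|
    have l2 := le_max_right |p.1 - q.1| |p.2 - q.2|
    have := abs_nonneg (p.1 - q.1)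
    have := abs_nonneg (p.2 - q.2)
    apply max_le <;> nlinarith
  set g : ℝ → ℝ × ℝ := fun t =>
    (A * Real.exp (-(t*s)) + B * Real.exp (t*s) + Kc,
     s*B * Real.exp (t*s) - s*A * Real.exp (-(t*s))) with hg_def
  set f : ℝ → ℝ × ℝ := fun t => (w t, w1 t) with hf_def
  have hgd : ∀ t : ℝ, HasDerivAt g (v t (g t)) t := by
    intro t
    have hE1 : HasDerivAt (fun u : ℝ => Real.exp (-(u*s))) (Real.exp (-(t*s)) * (-s)) t := by
      have := (((hasDerivAt_id t).mul_const s).neg).exp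
      simpa using this
    have hE2 : HasDerivAt (fun u : ℝ => Real.exp (u*s)) (Real.exp (t*s) * s) t := by
      have := ((hasDerivAt_id t).mul_const s).exp
      simpa using this
    have h1 : HasDerivAt (fun u => A * Real.exp (-(u*s)) + B * Real.exp (u*s) + Kc)
        (A * (Real.exp (-(t*s)) * (-s)) + B * (Real.exp (t*s) * s)) t :=
      ((hE1.const_mul A).add (hE2.const_mul B)).add_const Kc
    have h2 : HasDerivAt (fun u => s*B * Real.exp (u*s) - s*A * Real.exp (-(u*s)))
        (s*B * (Real.exp (t*s) * s) - s*A * (Real.exp (-(t*s)) * (-s))) t :=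
      (hE2.const_mul (s*B)).sub (hE1.const_mul (s*A))
    have := h1.prodMk h2
    convert this using 1
    simp only [hv_def, hg_def, Prod.mk.injEq]
    constructor
    · ring
    · linear_combination (-(A * Real.exp (-(t*s)) + B * Real.exp (t*s))) * hs2
  have hinit : f 0 = g 0 := by
    rw [hf_def, hg_def]
    simp only [zero_mul, neg_zero, Real.exp_zero, mul_one, Prod.mk.injEq]
    have hsb : s*B - s*A = D := by rw [hA, hB]; field_simp; ring
    constructor
    · linarith [e0, h0]
    · rw [hsb]
  have key : EqOn f g (Icc 0 z) := by
    apply ODE_solution_unique_of_mem_Icc_right (fun t _ => (hL t).lipschitzOnWith)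
      (hreg.continuousOn.prodMk hw1reg.continuousOn) ?_ (fun t _ => mem_univ (f t))
      (Continuous.continuousOn (by fun_prop)) (fun t _ => (hgd t).hasDerivWithinAt)
      (fun t _ => mem_univ (g t)) hinit
    intro t ht
    have hmem : Icc (0:ℝ) z ∈ nhdsWithin t (Ici t) :=
      mem_nhdsWithin.mpr ⟨Iio z, isOpen_Iio, ht.2, fun x hx => ⟨ht.1.trans hx.2, hx.1.le⟩⟩
    have ht' : t ∈ Icc (0:ℝ) z := ⟨ht.1, ht.2.le⟩
    exact (((hdw t ht').prodMk (hdw1 t ht')).mono_of_mem_nhdsWithin hmem)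
  have hw_eq : ∀ y ∈ Icc (0:ℝ) z,
      w y = A * Real.exp (-(y*s)) + B * Real.exp (y*s) + Kc := by
    intro y hy
    exact congrArg Prod.fst (key hy)
  -- algebra for the constants
  have hX1 : Real.exp (-(xR*s)) * Real.exp (xR*s) = 1 := by
    rw [← Real.exp_add]; simp
  have hZ1 : Real.exp (-(z*s)) * Real.exp (z*s) = 1 := by
    rw [← Real.exp_add]; simp
  have hxmem : xR ∈ Icc (0:ℝ) z := ⟨hxR.le, hxRz.le⟩
  have hzmem : z ∈ Icc (0:ℝ) z := ⟨hz.le, le_rfl⟩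
  have e1 : A * Real.exp (-(xR*s)) + B * Real.exp (xR*s) = 0 := by
    have := hw_eq xR hxmem
    rw [← hKc] at this; linarith
  have e2 : A * Real.exp (-(z*s)) + B * Real.exp (z*s) + Kc = 0 := by
    have := hw_eq z hzmem
    rw [hz0] at this; linarith
  set X := Real.exp (xR*s) with hXdef
  set Z := Real.exp (z*s) with hZdef
  have e1' : A + B * X^2 = 0 := by linear_combination X * e1 - A * hX1
  have e2' : A + B * Z^2 + Kc * Z = 0 := by linear_combination Z * e2 - A * hZ1
  have hZgt : 1 < Z := by
    rw [hZdef]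
    nlinarith [Real.add_one_le_exp (z*s), mul_pos hz hs0]
  have hXpos : 0 < X := Real.exp_pos _
  have hZpos : 0 < Z := Real.exp_pos _
  have hAval : A * ((Z-1)*(X^2+Z)) = X^2*Z := by
    linear_combination (Z^2-Z)*e1' + (-X^2)*e2' + (X^2*Z)*e0
  have hBval : B * ((Z-1)*(X^2+Z)) = -Z := by
    linear_combination (Z-1)*e1' + e2' + (-Z)*e0
  have hden : (0:ℝ) < (Z-1)*(X^2+Z) := by nlinarith
  -- rewrite goal exponentials
  have hEz : Real.exp (-z*s) = Z⁻¹ := by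
    rw [show -z*s = -(z*s) by ring, Real.exp_neg, hZdef]
  have hE2x : Real.exp (-2*xR*s) = X⁻¹ * X⁻¹ := by
    rw [show -2*xR*s = -(xR*s) + -(xR*s) by ring, Real.exp_add, Real.exp_neg, hXdef]
  have hαv : A = 1 / ((Z - 1) * (Z⁻¹ + X⁻¹ * X⁻¹)) := by
    rw [eq_div_iff]
    · field_simp
      linear_combination hAval
    · intro h
      apply hden.ne'
      field_simp at h
      nlinarith [h]
  have hXne : X ≠ 0 := hXpos.ne'
  have hBA : B = -(X⁻¹ * X⁻¹) * A := by
    field_simp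
    linear_combination e1'
  intro y hy
  rw [hw_eq y hy, hEz, hE2x, show Real.exp (-y*s) = Real.exp (-(y*s)) by rw [neg_mul],
    ← hαv, ← hBA]
  linarith [e0]
end

section
/- Let λ > 0, r > 0, x_R > 0, μ ∈ ℝ, and set s = μ + √(μ² + 2(λ + r)) and M_R = (λ + r)·exp(−x_R·s)/(λ + r·exp(−x_R·s)). Define M(x) = exp(−x·s) + M_R·(r/(λ + r))·(1 − exp(−x·s)). Then: (i) for all x, (1/2)·M''(x) + μ·M'(x) − (λ + r)·M(x) + r·M(x_R) = 0; (ii) M(0) = 1; (iii) M(x) tends to a finite limit as x → +∞; and (iv) M(x_R) = M_R. -/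
open Real Set Filter

theorem stmt_14 (lam r xR μ s MR : ℝ) (hlam : 0 < lam) (hr : 0 < r) (hxR : 0 < xR)
    (hs : s = μ + Real.sqrt (μ^2 + 2*(lam + r)))
    (hMR : MR = (lam + r) * Real.exp (-xR*s) / (lam + r * Real.exp (-xR*s)))
    (M : ℝ → ℝ)
    (hM : ∀ x, M x = Real.exp (-x*s) + MR * (r/(lam + r)) * (1 - Real.exp (-x*s))) :
    (∀ x : ℝ, (1/2) * deriv (deriv M) x + μ * deriv M x - (lam + r) * M x + r * M xR = 0)
    ∧ M 0 = 1
    ∧ (∃ L : ℝ, Filter.Tendsto M Filter.atTop (nhds L))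
    ∧ M xR = MR := by
  have hlr : 0 < lam + r := by linarith
  have hsq : Real.sqrt (μ^2 + 2*(lam+r)) ^ 2 = μ^2 + 2*(lam+r) := by
    rw [Real.sq_sqrt]; positivity
  have hsμ : s - μ = Real.sqrt (μ^2 + 2*(lam+r)) := by rw [hs]; ring
  have h3 : (s-μ)^2 = μ^2 + 2*(lam+r) := by rw [hsμ, hsq]
  have hs2 : s^2 - 2*μ*s = 2*(lam+r) := by linear_combination h3
  have hs0 : 0 < s := by
    have h1 : |μ| < Real.sqrt (μ^2 + 2*(lam+r)) := by
      rw [← Real.sqrt_sq_eq_abs]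
      apply Real.sqrt_lt_sqrt (sq_nonneg μ); linarith
    have h2 := (abs_lt.mp h1).1
    rw [hs]; linarith
  have hMfun : M = fun x => Real.exp (-x*s) + MR * (r/(lam+r)) * (1 - Real.exp (-x*s)) := by
    funext x; rw [hM]
  have he : ∀ x : ℝ, HasDerivAt (fun x => Real.exp (-x*s)) (Real.exp (-x*s) * (-1*s)) x := by
    intro x
    exact ((hasDerivAt_id x).neg.mul_const s).exp
  have hM1 : ∀ x : ℝ, HasDerivAt M (Real.exp (-x*s) * (-1*s)
      + MR * (r/(lam+r)) * (0 - Real.exp (-x*s) * (-1*s))) x := by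
    intro x
    rw [hMfun]
    exact (he x).add ((((hasDerivAt_const x (1:ℝ)).sub (he x))).const_mul _)
  have hdM : deriv M = fun x => Real.exp (-x*s) * (-1*s)
      + MR * (r/(lam+r)) * (0 - Real.exp (-x*s) * (-1*s)) := by
    funext x; exact (hM1 x).deriv
  have hM2 : ∀ x : ℝ, HasDerivAt (deriv M) (Real.exp (-x*s) * (-1*s) * (-1*s)
      + MR * (r/(lam+r)) * (0 - Real.exp (-x*s) * (-1*s) * (-1*s))) x := by
    intro x
    rw [hdM]
    exact ((he x).mul_const (-1*s)).add
      (((hasDerivAt_const x (0:ℝ)).sub ((he x).mul_const (-1*s))).const_mul _)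
  -- part iv
  have heR : 0 < Real.exp (-xR*s) := Real.exp_pos _
  have hden : lam + r * Real.exp (-xR*s) ≠ 0 := by positivity
  have hcne : (lam + r) ≠ 0 := ne_of_gt hlr
  have hiv : M xR = MR := by
    rw [hM, hMR]
    field_simp
    ring
  refine ⟨?_, ?_, ?_, hiv⟩
  · intro x
    rw [(hM2 x).deriv, (hM1 x).deriv, hM x, hiv]
    have hkey : 1/2*s^2 - μ*s - (lam+r) = 0 := by linarith
    have hq : (lam + r) * (lam + r)⁻¹ = 1 := mul_inv_cancel₀ hcne
    linear_combination ((1 - MR*r*(lam+r)⁻¹) * Real.exp (-x*s)) * hkey - r*MR*hq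
  · rw [hM]; simp
  · refine ⟨MR * (r/(lam+r)), ?_⟩
    have hE : Tendsto (fun x : ℝ => Real.exp (-x*s)) atTop (nhds 0) := by
      have h1 : Tendsto (fun x : ℝ => -x*s) atTop atBot := by
        simp only [neg_mul]
        exact tendsto_neg_atTop_atBot.comp (tendsto_id.atTop_mul_const hs0)
      exact Real.tendsto_exp_atBot.comp h1
    rw [hMfun]
    have h4 : Tendsto (fun x : ℝ => Real.exp (-x*s) + MR*(r/(lam+r))*(1 - Real.exp (-x*s)))
        atTop (nhds (0 + MR*(r/(lam+r))*(1 - 0))) :=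
      hE.add (((tendsto_const_nhds (x := (1:ℝ))).sub hE).const_mul _)
    simpa using h4
end

section
/- Let r > 0, x_R > 0, μ ∈ ℝ, and set s = μ + √(μ² + 2r). If T : ℝ → ℝ is twice continuously differentiable on [0, ∞), bounded on [0, ∞), satisfies T(0) = 0 and (1/2)·T''(x) + μ·T'(x) − r·T(x) = −1 − r·T(x_R) for all x ≥ 0, then T(x) = (1/r)·exp(x_R·s)·(1 − exp(−x·s)) for all x ≥ 0; in particular T(x) → (1/r)·exp(x_R·s) as x → +∞. -/
open Real Set Filter

lemma const_of_zero_deriv {f : ℝ → ℝ}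
    (hf : ∀ x ∈ Ici (0:ℝ), HasDerivWithinAt f 0 (Ici 0) x) :
    ∀ x ∈ Ici (0:ℝ), f x = f 0 := by
  intro x hx
  apply (convex_Ici (0:ℝ)).is_const_of_fderivWithin_eq_zero
    (fun y hy => (hf y hy).differentiableWithinAt) ?_ hx self_mem_Ici
  intro y hy
  rw [(hf y hy).hasFDerivWithinAt.fderivWithin ((uniqueDiffOn_Ici 0) y hy)]
  ext; simp

theorem stmt_15 (r xR μ s : ℝ) (hr : 0 < r) (hxR : 0 < xR)
    (hs : s = μ + Real.sqrt (μ^2 + 2*r))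
    (T : ℝ → ℝ)
    (hreg : ContDiffOn ℝ 2 T (Set.Ici 0))
    (hbdd : ∃ C, ∀ x ∈ Set.Ici (0:ℝ), |T x| ≤ C)
    (h0 : T 0 = 0)
    (hode : ∀ x ∈ Set.Ici (0:ℝ),
      (1/2) * iteratedDerivWithin 2 T (Set.Ici 0) x
        + μ * derivWithin T (Set.Ici 0) x - r * T x = -1 - r * T xR) :
    (∀ x ∈ Set.Ici (0:ℝ),
      T x = (1/r) * Real.exp (xR*s) * (1 - Real.exp (-x*s)))
    ∧ Filter.Tendsto T Filter.atTop (nhds ((1/r) * Real.exp (xR*s))) := by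
  -- characteristic roots as opaque constants
  obtain ⟨a, b, ha, hb, hsum, hprod, hbs⟩ :
      ∃ a b : ℝ, 0 < a ∧ b < 0 ∧ a + b = -(2*μ) ∧ a * b = -(2*r) ∧ b = -s := by
    have hsq2 : Real.sqrt (μ^2 + 2*r) ^ 2 = μ^2 + 2*r := Real.sq_sqrt (by positivity)
    have hmu_lt : |μ| < Real.sqrt (μ^2 + 2*r) := by
      have : Real.sqrt (μ^2) < Real.sqrt (μ^2 + 2*r) :=
        Real.sqrt_lt_sqrt (by positivity) (by linarith)
      rwa [Real.sqrt_sq_eq_abs] at this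
    have habs := abs_lt.mp hmu_lt
    refine ⟨-μ + Real.sqrt (μ^2 + 2*r), -μ - Real.sqrt (μ^2 + 2*r),
      by linarith, by linarith, by ring, by nlinarith, by rw [hs]; ring⟩
  have hspos : 0 < s := by linarith [hbs ▸ hb]
  have hab_pos : 0 < a - b := by linarith
  obtain ⟨A, hrA⟩ : ∃ A : ℝ, r * A = 1 + r * T xR :=
    ⟨(1 + r * T xR) / r, by field_simp⟩
  -- derivatives
  set T1 : ℝ → ℝ := derivWithin T (Ici 0) with hT1def
  have h2 : (2 : WithTop ℕ∞) = 1 + 1 := by norm_num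
  rw [h2, contDiffOn_succ_iff_derivWithin (uniqueDiffOn_Ici 0)] at hreg
  have hdiff : DifferentiableOn ℝ T (Ici 0) := hreg.1
  have hdiff1 : DifferentiableOn ℝ T1 (Ici 0) := hreg.2.2.differentiableOn one_ne_zero
  set T2 : ℝ → ℝ := derivWithin T1 (Ici 0) with hT2def
  have hiter : ∀ x ∈ Ici (0:ℝ), iteratedDerivWithin 2 T (Ici 0) x = T2 x := by
    intro x hx
    rw [show (2:ℕ) = 1 + 1 from rfl, iteratedDerivWithin_succ',
      iteratedDerivWithin_one]
  have hT2eq : ∀ x ∈ Ici (0:ℝ), T2 x = 2*r*(T x - A) - 2*μ*(T1 x) := by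
    intro x hx
    have h := hode x hx
    rw [hiter x hx] at h
    nlinarith [h, hrA]
  have hT' : ∀ x ∈ Ici (0:ℝ), HasDerivWithinAt T (T1 x) (Ici 0) x :=
    fun x hx => (hdiff x hx).hasDerivWithinAt
  have hT1' : ∀ x ∈ Ici (0:ℝ), HasDerivWithinAt T1 (T2 x) (Ici 0) x :=
    fun x hx => (hdiff1 x hx).hasDerivWithinAt
  -- step 1 : first integration
  obtain ⟨C, hCdef⟩ : ∃ C : ℝ, C = T1 0 - b * (T 0 - A) := ⟨_, rfl⟩
  have key1 : ∀ x ∈ Ici (0:ℝ), T1 x - b * (T x - A) = C * Real.exp (a*x) := by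
    have hconst := const_of_zero_deriv (f :=
      fun x => Real.exp (-(a*x)) * (T1 x - b * (T x - A))) ?_
    · intro x hx
      have h := hconst x hx
      simp only [mul_zero, neg_zero, Real.exp_zero, one_mul] at h
      rw [← hCdef] at h
      have hmul := congrArg (fun t => t * Real.exp (a*x)) h
      rwa [mul_comm (Real.exp (-(a*x))) _, mul_assoc, ← Real.exp_add, neg_add_cancel,
        Real.exp_zero, mul_one] at hmul
    · intro x hx
      have e1 : HasDerivWithinAt (fun x : ℝ => Real.exp (-(a*x)))
          (Real.exp (-(a*x)) * (-a)) (Ici 0) x := by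
        have : HasDerivWithinAt (fun x : ℝ => -(a*x)) (-a) (Ici 0) x := by
          simpa [Pi.neg_def] using (((hasDerivAt_id x).const_mul a).neg).hasDerivWithinAt
        exact this.exp
      have e2 : HasDerivWithinAt (fun x => T1 x - b * (T x - A))
          (T2 x - b * (T1 x)) (Ici 0) x :=
        (hT1' x hx).sub ((((hT' x hx).sub_const A)).const_mul b)
      have hval : Real.exp (-(a*x)) * (-a) * (T1 x - b * (T x - A))
          + Real.exp (-(a*x)) * (T2 x - b * (T1 x)) = 0 := by
        rw [hT2eq x hx]
        linear_combination Real.exp (-(a*x)) * (T x - A) * hprod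
          - Real.exp (-(a*x)) * T1 x * hsum
      simpa only [hval, Pi.mul_def] using e1.mul e2
  -- step 2 : second integration
  obtain ⟨D, hDab⟩ : ∃ D : ℝ, D * (a - b) = C :=
    ⟨C / (a - b), by field_simp⟩
  have key2 : ∀ x ∈ Ici (0:ℝ),
      T x - A = (-A - D) * Real.exp (b*x) + D * Real.exp (a*x) := by
    have hconst := const_of_zero_deriv (f :=
      fun x => Real.exp (-(b*x)) * (T x - A) - D * Real.exp ((a-b)*x)) ?_
    · intro x hx
      have h := hconst x hx
      simp only [mul_zero, neg_zero, Real.exp_zero, one_mul, mul_one, h0, zero_sub] at h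
      have hE1 : Real.exp (b*x) * Real.exp (-(b*x)) = 1 := by
        rw [← Real.exp_add]; simp
      have hE2 : Real.exp (b*x) * Real.exp ((a-b)*x) = Real.exp (a*x) := by
        rw [← Real.exp_add]; ring_nf
      linear_combination Real.exp (b*x) * h - (T x - A) * hE1 + D * hE2
    · intro x hx
      have e1 : HasDerivWithinAt (fun x : ℝ => Real.exp (-(b*x)))
          (Real.exp (-(b*x)) * (-b)) (Ici 0) x := by
        have : HasDerivWithinAt (fun x : ℝ => -(b*x)) (-b) (Ici 0) x := by
          simpa [Pi.neg_def] using (((hasDerivAt_id x).const_mul b).neg).hasDerivWithinAt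
        exact this.exp
      have e2 : HasDerivWithinAt (fun x => T x - A) (T1 x) (Ici 0) x :=
        (hT' x hx).sub_const A
      have e3 : HasDerivWithinAt (fun x : ℝ => Real.exp ((a-b)*x))
          (Real.exp ((a-b)*x) * (a-b)) (Ici 0) x := by
        have : HasDerivWithinAt (fun x : ℝ => (a-b)*x) (a-b) (Ici 0) x := by
          simpa using ((hasDerivAt_id x).const_mul (a-b)).hasDerivWithinAt
        exact this.exp
      have hkey := key1 x hx
      have hE : Real.exp (-(b*x)) * Real.exp (a*x) = Real.exp ((a-b)*x) := by
        rw [← Real.exp_add]; ring_nf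
      have hval : Real.exp (-(b*x)) * (-b) * (T x - A) + Real.exp (-(b*x)) * T1 x
          - D * (Real.exp ((a-b)*x) * (a-b)) = 0 := by
        linear_combination Real.exp (-(b*x)) * hkey + C * hE - Real.exp ((a-b)*x) * hDab
      simpa only [hval, Pi.mul_def, Pi.sub_def] using (e1.mul e2).sub (e3.const_mul D)
  -- step 3 : boundedness forces D = 0
  obtain ⟨C0, hC0⟩ := hbdd
  have hD0 : D = 0 := by
    by_contra hD0
    have hDpos : 0 < |D| := abs_pos.mpr hD0
    obtain ⟨M, hMdef⟩ : ∃ M : ℝ, M = C0 + |A| + |(-A - D)| := ⟨_, rfl⟩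
    have hM : ∀ x ∈ Ici (0:ℝ), |D| * Real.exp (a*x) ≤ M := by
      intro x hx
      have h := key2 x hx
      have hDx : D * Real.exp (a*x) = T x - A - (-A - D) * Real.exp (b*x) := by
        linarith [h]
      have hexpb : Real.exp (b*x) ≤ 1 := by
        rw [Real.exp_le_one_iff]
        exact mul_nonpos_of_nonpos_of_nonneg hb.le hx
      have h2' : |(-A - D) * Real.exp (b*x)| ≤ |(-A - D)| := by
        rw [abs_mul, abs_of_pos (Real.exp_pos _)]
        nlinarith [abs_nonneg (-A - D), Real.exp_pos (b*x)]
      calc |D| * Real.exp (a*x) = |D * Real.exp (a*x)| := by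
              rw [abs_mul, abs_of_pos (Real.exp_pos _)]
        _ = |T x - A - (-A - D) * Real.exp (b*x)| := by rw [hDx]
        _ ≤ |T x - A| + |(-A - D) * Real.exp (b*x)| := abs_sub _ _
        _ ≤ (|T x| + |A|) + |(-A - D)| := by linarith [abs_sub (T x) A]
        _ ≤ M := by rw [hMdef]; linarith [hC0 x hx]
    have hMD : |D| ≤ M := by
      have h := hM 0 self_mem_Ici
      simpa using h
    obtain ⟨x0, hx0def⟩ : ∃ x0 : ℝ, x0 = (Real.log (M / |D|) + 1) / a := ⟨_, rfl⟩
    have hlogpos : 0 ≤ Real.log (M / |D|) := by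
      apply Real.log_nonneg
      rw [le_div_iff₀ hDpos]; linarith
    have hx0 : 0 ≤ x0 := by rw [hx0def]; positivity
    have hax0 : Real.log (M / |D|) < a * x0 := by
      rw [hx0def, mul_div_cancel₀ _ (ne_of_gt ha)]; linarith
    have hMDpos : 0 < M / |D| := by
      apply div_pos (by linarith) hDpos
    have hgt : M / |D| < Real.exp (a * x0) := by
      calc M / |D| = Real.exp (Real.log (M / |D|)) := by rw [Real.exp_log hMDpos]
        _ < Real.exp (a * x0) := Real.exp_lt_exp.mpr hax0
    have hcontra : M < |D| * Real.exp (a * x0) := by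
      calc M = |D| * (M / |D|) := by field_simp
        _ < |D| * Real.exp (a * x0) := mul_lt_mul_of_pos_left hgt hDpos
    linarith [hM x0 hx0]
  -- step 4 : identify A and the final formula
  have hTx : ∀ x ∈ Ici (0:ℝ), T x = A * (1 - Real.exp (-(s*x))) := by
    intro x hx
    have h := key2 x hx
    rw [hD0] at h
    have hbx : b * x = -(s*x) := by rw [hbs]; ring
    rw [hbx] at h
    linarith [h]
  have hTxR : T xR = A * (1 - Real.exp (-(s*xR))) := hTx xR (le_of_lt hxR)
  have h1 : r * A * Real.exp (-(s*xR)) = 1 := by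
    linear_combination hrA + r * hTxR
  have he : Real.exp (-(s*xR)) * Real.exp (s*xR) = 1 := by
    rw [← Real.exp_add]; simp
  have hA : A = (1/r) * Real.exp (xR*s) := by
    rw [show xR * s = s * xR by ring]
    have hr' : (r:ℝ) ≠ 0 := ne_of_gt hr
    field_simp
    linear_combination Real.exp (s*xR) * h1 - r * A * he
  have hfinal : ∀ x ∈ Ici (0:ℝ),
      T x = (1/r) * Real.exp (xR*s) * (1 - Real.exp (-x*s)) := by
    intro x hx
    rw [show -x*s = -(s*x) by ring, hTx x hx, hA]
  refine ⟨hfinal, ?_⟩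
  -- step 5 : the limit
  have hlim0 : Tendsto (fun x : ℝ => Real.exp (-x*s)) atTop (nhds 0) := by
    have h1 : Tendsto (fun x : ℝ => x * s) atTop atTop :=
      Tendsto.atTop_mul_const hspos tendsto_id
    have h2 : Tendsto (fun x : ℝ => -x*s) atTop atBot :=
      (tendsto_neg_atTop_atBot.comp h1).congr fun x => by
        simp [Function.comp, neg_mul]
    exact Real.tendsto_exp_atBot.comp h2
  have hlim : Tendsto (fun x : ℝ => (1/r) * Real.exp (xR*s) * (1 - Real.exp (-x*s)))
      atTop (nhds ((1/r) * Real.exp (xR*s))) := by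
    have hsub : Tendsto (fun x : ℝ => (1:ℝ) - Real.exp (-x*s)) atTop (nhds (1 - 0)) :=
      Tendsto.sub tendsto_const_nhds hlim0
    have h := hsub.const_mul ((1/r) * Real.exp (xR*s))
    simpa using h
  apply hlim.congr'
  filter_upwards [eventually_ge_atTop (0:ℝ)] with x hx
  exact (hfinal x hx).symm
end

section
/- Let r > 0, x_R > 0, μ ∈ ℝ, set q = √(μ² + 2r), s = μ + q, and T₁(x) = (1/r)·e^{x_R·s}·(1 − e^{−x·s}). Define T₂(x) = e^{x_R·s}·((2/r²)·e^{x_R·s} − 2/r² − 2x_R/(r·q))·(1 − e^{−x·s}) − (2/r)·e^{(x_R − x)·s}·(1/r + x/q) + (2/r²)·e^{x_R·s}. Then: (i) for all x ≥ 0, (1/2)·T₂''(x) + μ·T₂'(x) − r·T₂(x) = −2·T₁(x) − r·T₂(x_R); (ii) T₂(0) = 0; and (iii) T₂ is bounded on [0, ∞). -/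
open Real Set Filter

lemma aux_all_16 (r q s A B C : ℝ) (hr : 0 < r) (hq0 : 0 < q) (hs0 : 0 < s)
    (T : ℝ → ℝ)
    (hT : ∀ x, T x = A + C - A * Real.exp (-x*s) - B * (Real.exp (-x*s) * (1/r + x/q))) :
    (∀ x, deriv T x = A*s*Real.exp (-x*s) + B*(s*(1/r + x/q) - 1/q)*Real.exp (-x*s))
  ∧ (∀ x, deriv (deriv T) x = A*s*(-s*Real.exp (-x*s))
      + B*((s*(1/r+x/q) - 1/q)*(-s*Real.exp (-x*s)) + s*(1/q)*Real.exp (-x*s)))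
  ∧ (∃ K, ∀ x ∈ Set.Ici (0:ℝ), |T x| ≤ K) := by
  have hTfun : T = fun x => A + C - A * Real.exp (-x*s)
      - B * (Real.exp (-x*s) * (1/r + x/q)) := funext hT
  have hE : ∀ x : ℝ, HasDerivAt (fun y : ℝ => Real.exp (-y*s)) (-s * Real.exp (-x*s)) x := by
    intro x
    have h : HasDerivAt (fun y : ℝ => -y*s) (-s) x := by
      simpa using ((hasDerivAt_id x).neg.mul_const s)
    simpa [mul_comm] using h.exp
  have hL : ∀ x : ℝ, HasDerivAt (fun y : ℝ => 1/r + y/q) (1/q) x := fun x => by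
    simpa using ((hasDerivAt_id x).div_const q).const_add (1/r)
  have hD1 : ∀ x : ℝ, HasDerivAt T
      (A*s*Real.exp (-x*s) + B*(s*(1/r + x/q) - 1/q)*Real.exp (-x*s)) x := by
    intro x
    rw [hTfun]
    have h := ((hasDerivAt_const x (A + C)).sub ((hE x).const_mul A)).sub
      (((hE x).mul (hL x)).const_mul B)
    refine h.congr_deriv ?_
    ring
  have hderiv : deriv T = fun x => A*s*Real.exp (-x*s)
      + B*(s*(1/r + x/q) - 1/q)*Real.exp (-x*s) := funext fun x => (hD1 x).deriv
  have hD2 : ∀ x : ℝ, deriv (deriv T) x = A*s*(-s*Real.exp (-x*s))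
      + B*((s*(1/r+x/q) - 1/q)*(-s*Real.exp (-x*s)) + s*(1/q)*Real.exp (-x*s)) := by
    intro x
    have h1 := (hE x).const_mul (A*s)
    have h2 := ((((hL x).const_mul s).sub_const (1/q)).const_mul B).mul (hE x)
    have h : HasDerivAt (deriv T) (A*s*(-s*Real.exp (-x*s))
        + B*((s*(1/r+x/q) - 1/q)*(-s*Real.exp (-x*s)) + s*(1/q)*Real.exp (-x*s))) x := by
      rw [hderiv]
      refine (h1.add h2).congr_deriv ?_
      ring
    exact h.deriv
  refine ⟨fun x => (hD1 x).deriv, hD2, ⟨|A| + |C| + |A| + |B| * (1/r + 1/(s*q)), ?_⟩⟩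
  intro x hx
  have hx0 : (0:ℝ) ≤ x := hx
  have hep : 0 < Real.exp (-x*s) := Real.exp_pos _
  have he1 : Real.exp (-x*s) ≤ 1 := by
    apply Real.exp_le_one_iff.mpr
    nlinarith
  have hxe : x * Real.exp (-x*s) ≤ 1/s := by
    rw [show -x*s = -(x*s) by ring, Real.exp_neg, ← div_eq_mul_inv,
      div_le_div_iff₀ (Real.exp_pos _) hs0]
    nlinarith [Real.add_one_le_exp (x*s)]
  have hL0 : 0 ≤ 1/r + x/q := by positivity
  have hLb : Real.exp (-x*s) * (1/r + x/q) ≤ 1/r + 1/(s*q) := by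
    have h1 : Real.exp (-x*s) * (1/r) ≤ 1/r := by
      nlinarith [one_div_pos.mpr hr]
    have h2 : Real.exp (-x*s) * (x/q) ≤ 1/(s*q) := by
      rw [show Real.exp (-x*s) * (x/q) = (x * Real.exp (-x*s))/q by ring, ← div_div]
      gcongr
    calc Real.exp (-x*s) * (1/r + x/q)
        = Real.exp (-x*s) * (1/r) + Real.exp (-x*s) * (x/q) := by ring
      _ ≤ 1/r + 1/(s*q) := by linarith
  have hAe : |A * Real.exp (-x*s)| ≤ |A| := by
    rw [abs_mul, abs_of_pos hep]
    nlinarith [abs_nonneg A]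
  have hBe : |B * (Real.exp (-x*s) * (1/r + x/q))| ≤ |B| * (1/r + 1/(s*q)) := by
    rw [abs_mul, abs_of_nonneg (by positivity : (0:ℝ) ≤ Real.exp (-x*s) * (1/r + x/q))]
    exact mul_le_mul_of_nonneg_left hLb (abs_nonneg B)
  have htri : |T x| ≤ |A + C| + |A * Real.exp (-x*s)|
      + |B * (Real.exp (-x*s) * (1/r + x/q))| := by
    rw [hT x]
    calc |A + C - A * Real.exp (-x*s) - B * (Real.exp (-x*s) * (1/r + x/q))|
        ≤ |A + C - A * Real.exp (-x*s)| + |B * (Real.exp (-x*s) * (1/r + x/q))| :=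
          abs_sub _ _
      _ ≤ |A + C| + |A * Real.exp (-x*s)| + |B * (Real.exp (-x*s) * (1/r + x/q))| := by
          linarith [abs_sub (A + C) (A * Real.exp (-x*s))]
  have habs : |A + C| ≤ |A| + |C| := abs_add_le A C
  linarith

theorem stmt_16 (r xR μ q s : ℝ) (hr : 0 < r) (hxR : 0 < xR)
    (hq : q = Real.sqrt (μ^2 + 2*r)) (hs : s = μ + q)
    (T₁ T₂ : ℝ → ℝ)
    (hT1 : ∀ x, T₁ x = (1/r) * Real.exp (xR*s) * (1 - Real.exp (-x*s)))
    (hT2 : ∀ x, T₂ x =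
      Real.exp (xR*s) * ((2/r^2) * Real.exp (xR*s) - 2/r^2 - 2*xR/(r*q))
        * (1 - Real.exp (-x*s))
      - (2/r) * Real.exp ((xR - x)*s) * (1/r + x/q)
      + (2/r^2) * Real.exp (xR*s)) :
    (∀ x : ℝ, 0 ≤ x →
      (1/2) * deriv (deriv T₂) x + μ * deriv T₂ x - r * T₂ x
        = -2 * T₁ x - r * T₂ xR)
    ∧ T₂ 0 = 0
    ∧ (∃ C, ∀ x ∈ Set.Ici (0:ℝ), |T₂ x| ≤ C) := by
  have hq0 : 0 < q := by
    rw [hq]; exact Real.sqrt_pos.mpr (by positivity)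
  have hq2 : q^2 = μ^2 + 2*r := by
    rw [hq, Real.sq_sqrt (by positivity)]
  subst hs
  have hs0 : 0 < μ + q := by nlinarith [sq_nonneg (μ + q)]
  have hclean : ∀ x, T₂ x =
      (Real.exp (xR*(μ+q)) * ((2/r^2) * Real.exp (xR*(μ+q)) - 2/r^2 - 2*xR/(r*q)))
      + ((2/r^2) * Real.exp (xR*(μ+q)))
      - (Real.exp (xR*(μ+q)) * ((2/r^2) * Real.exp (xR*(μ+q)) - 2/r^2 - 2*xR/(r*q)))
        * Real.exp (-x*(μ+q))
      - ((2/r) * Real.exp (xR*(μ+q))) * (Real.exp (-x*(μ+q)) * (1/r + x/q)) := by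
    intro x
    rw [hT2 x, show (xR - x)*(μ+q) = xR*(μ+q) + -x*(μ+q) by ring, Real.exp_add]
    ring
  obtain ⟨hd1, hd2, hbdd⟩ := aux_all_16 r q (μ+q)
    (Real.exp (xR*(μ+q)) * ((2/r^2) * Real.exp (xR*(μ+q)) - 2/r^2 - 2*xR/(r*q)))
    ((2/r) * Real.exp (xR*(μ+q)))
    ((2/r^2) * Real.exp (xR*(μ+q)))
    hr hq0 hs0 T₂ hclean
  refine ⟨?_, ?_, hbdd⟩
  · intro x hx
    rw [hd2 x, hd1 x, hT1 x, hclean x, hclean xR,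
      show -xR*(μ+q) = -(xR*(μ+q)) by ring, Real.exp_neg]
    have hne : q^2 - μ^2 ≠ 0 := by nlinarith
    have hr' : r = (q^2 - μ^2)/2 := by linarith
    rw [hr']
    field_simp
    ring
  · rw [hclean 0]
    simp only [neg_zero, zero_mul, Real.exp_zero, zero_div, mul_one, one_mul, add_zero]
    ring
end

section
/- Let r > 0, x_R > 0, μ ∈ ℝ, set s = μ + √(μ² + 2r) and α = e^{x_R·s}·(x_R/r + (μ/r²)·(1 − e^{−x_R·s})). Define T(x) = α·(1 − e^{−x·s}) + x/r + (μ/r²)·(1 − e^{−x·s}). Then: (i) for all x ≥ 0, (1/2)·T''(x) + μ·T'(x) − r·T(x) = −x − r·T(x_R); (ii) T(0) = 0; and (iii) T(x_R) = α. -/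
open Real Set Filter

theorem stmt_17 (r xR μ s α : ℝ) (hr : 0 < r) (hxR : 0 < xR)
    (hs : s = μ + Real.sqrt (μ^2 + 2*r))
    (hα : α = Real.exp (xR*s) * (xR/r + (μ/r^2) * (1 - Real.exp (-xR*s))))
    (T : ℝ → ℝ)
    (hT : ∀ x, T x = α * (1 - Real.exp (-x*s)) + x/r
      + (μ/r^2) * (1 - Real.exp (-x*s))) :
    (∀ x : ℝ, 0 ≤ x →
      (1/2) * deriv (deriv T) x + μ * deriv T x - r * T x = -x - r * T xR)
    ∧ T 0 = 0
    ∧ T xR = α := by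
  have hr' : r ≠ 0 := ne_of_gt hr
  set c : ℝ := α + μ/r^2 with hc
  have hTf : T = fun x => c * (1 - Real.exp (-x*s)) + x/r := by
    funext x; rw [hT x]; ring
  have hE : ∀ x : ℝ, HasDerivAt (fun y : ℝ => Real.exp (-y*s)) (-s * Real.exp (-x*s)) x := by
    intro x
    have h1 : HasDerivAt (fun y : ℝ => -y*s) (-s) x := by
      simpa using ((hasDerivAt_id x).neg.mul_const s)
    simpa [mul_comm] using h1.exp
  have hd1 : ∀ x : ℝ, HasDerivAt T (c * (s * Real.exp (-x*s)) + 1/r) x := by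
    intro x
    rw [hTf]
    have h1 : HasDerivAt (fun y : ℝ => c * (1 - Real.exp (-y*s)))
        (c * (s * Real.exp (-x*s))) x := by
      have := ((hasDerivAt_const x (1:ℝ)).sub (hE x)).const_mul c
      simpa using this
    have h2 : HasDerivAt (fun y : ℝ => y/r) (1/r) x := by
      simpa using (hasDerivAt_id x).div_const r
    exact h1.add h2
  have hD1 : deriv T = fun x => c * (s * Real.exp (-x*s)) + 1/r := by
    funext x; exact (hd1 x).deriv
  have hd2 : ∀ x : ℝ, HasDerivAt (deriv T) (-(c * s^2 * Real.exp (-x*s))) x := by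
    intro x
    rw [hD1]
    have h1 : HasDerivAt (fun y : ℝ => c * (s * Real.exp (-y*s)))
        (-(c * s^2 * Real.exp (-x*s))) x := by
      have := ((hE x).const_mul s).const_mul c
      rw [show -(c * s^2 * Real.exp (-x*s)) = c * (s * (-s * Real.exp (-x*s))) by ring]
      exact this
    simpa using h1.add_const (1/r)
  have hs2 : s^2 = 2*μ*s + 2*r := by
    have hnn : (0:ℝ) ≤ μ^2 + 2*r := by positivity
    have hsq : Real.sqrt (μ^2 + 2*r) ^ 2 = μ^2 + 2*r := Real.sq_sqrt hnn
    have : (s - μ)^2 = μ^2 + 2*r := by rw [hs]; simpa using hsq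
    nlinarith [this]
  have hE0 : Real.exp (-xR*s) ≠ 0 := Real.exp_ne_zero _
  have hTxR : T xR = α := by
    rw [hT, hα]
    have hinv : Real.exp (xR*s) = (Real.exp (-xR*s))⁻¹ := by
      rw [← Real.exp_neg]; ring_nf
    rw [hinv]
    field_simp
    ring
  refine ⟨?_, ?_, hTxR⟩
  · intro x _
    rw [(hd2 x).deriv, (hd1 x).deriv, hT x, hTxR]
    have hα' : r * α = r * c - μ/r := by
      rw [hc]; field_simp; ring
    have key : (1:ℝ)/2 * -(c * s^2 * Real.exp (-x*s))
        + μ * (c * (s * Real.exp (-x*s)) + 1/r)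
        - r * (α * (1 - Real.exp (-x*s)) + x/r + μ/r^2 * (1 - Real.exp (-x*s)))
        = -x - r * α := by
      have : α * (1 - Real.exp (-x*s)) + x/r + μ/r^2 * (1 - Real.exp (-x*s))
          = c * (1 - Real.exp (-x*s)) + x/r := by rw [hc]; ring
      rw [this, hs2]
      linear_combination hα' - x * mul_inv_cancel₀ hr'
    exact key
  · rw [hT]; simp
end

section
/- Let r > 0, x_R > 0, z > 0, μ ∈ ℝ, set q = √(μ² + 2r), d₁ = −μ − q, d₂ = −μ + q, and define c₁ = −1/(exp(−(μ + q)·z) − 1 + exp(−2x_R·q)·(1 − exp(−(μ − q)·z))), c₂ = −c₁·exp(−2x_R·q), a = 1 − c₁ − c₂. Define w(y) = c₁·e^{d₁·y} + c₂·e^{d₂·y} + a. Then: (i) for all y, (1/2)·w''(y) + μ·w'(y) − r·w(y) + r·w(x_R) = 0; (ii) w(0) = 1; (iii) w(z) = 0; and (iv) w(x_R) = a. -/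
open Real Set Filter

theorem stmt_18 (r xR z μ q d₁ d₂ c₁ c₂ a : ℝ) (hr : 0 < r) (hxR : 0 < xR)
    (hz : 0 < z)
    (hq : q = Real.sqrt (μ^2 + 2*r))
    (hd1 : d₁ = -μ - q) (hd2 : d₂ = -μ + q)
    (hc1 : c₁ = -1 / (Real.exp (-(μ + q)*z) - 1
      + Real.exp (-2*xR*q) * (1 - Real.exp (-(μ - q)*z))))
    (hc2 : c₂ = -c₁ * Real.exp (-2*xR*q))
    (ha : a = 1 - c₁ - c₂)
    (w : ℝ → ℝ)
    (hw : ∀ y, w y = c₁ * Real.exp (d₁*y) + c₂ * Real.exp (d₂*y) + a) :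
    (∀ y : ℝ, (1/2) * deriv (deriv w) y + μ * deriv w y - r * w y + r * w xR = 0)
    ∧ w 0 = 1
    ∧ w z = 0
    ∧ w xR = a := by
  have hq2 : q^2 = μ^2 + 2*r := by
    rw [hq, Real.sq_sqrt]; nlinarith [sq_nonneg μ]
  have hqpos : 0 < q := by
    rw [hq]; apply Real.sqrt_pos.mpr; nlinarith [sq_nonneg μ]
  have hmuq : 0 < μ + q := by nlinarith [sq_nonneg (μ - q), sq_nonneg (μ + q)]
  have hmuq' : μ - q < 0 := by nlinarith [sq_nonneg (μ - q), sq_nonneg (μ + q)]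
  -- denominator is negative
  set D : ℝ := Real.exp (-(μ + q)*z) - 1
      + Real.exp (-2*xR*q) * (1 - Real.exp (-(μ - q)*z)) with hD
  have hDneg : D < 0 := by
    have h1 : Real.exp (-(μ + q)*z) < 1 := by
      rw [Real.exp_lt_one_iff]; nlinarith
    have h2 : (1:ℝ) < Real.exp (-(μ - q)*z) := by
      rw [Real.one_lt_exp_iff]; nlinarith
    have h3 : 0 < Real.exp (-2*xR*q) := Real.exp_pos _
    nlinarith
  have hc1D : c₁ * D = -1 := by
    rw [hc1]; field_simp [hDneg.ne]
  -- w xR = a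
  have hwxR : w xR = a := by
    have key : Real.exp (-2*xR*q) * Real.exp (d₂*xR) = Real.exp (d₁*xR) := by
      rw [← Real.exp_add]; congr 1; rw [hd1, hd2]; ring
    rw [hw, hc2]
    nlinarith [key]
  -- derivative computations
  have hW1 : ∀ y, HasDerivAt w (c₁ * (d₁ * Real.exp (d₁*y)) + c₂ * (d₂ * Real.exp (d₂*y))) y := by
    intro y
    have hwf : w = fun y => c₁ * Real.exp (d₁*y) + c₂ * Real.exp (d₂*y) + a := funext hw
    rw [hwf]
    have h1 : HasDerivAt (fun y => Real.exp (d₁*y)) (d₁ * Real.exp (d₁*y)) y := by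
      simpa [mul_comm, Function.comp_def] using (Real.hasDerivAt_exp (d₁*y)).comp y
        ((hasDerivAt_id y).const_mul d₁)
    have h2 : HasDerivAt (fun y => Real.exp (d₂*y)) (d₂ * Real.exp (d₂*y)) y := by
      simpa [mul_comm, Function.comp_def] using (Real.hasDerivAt_exp (d₂*y)).comp y
        ((hasDerivAt_id y).const_mul d₂)
    exact ((h1.const_mul c₁).add (h2.const_mul c₂)).add_const a
  have hd1w : deriv w = fun y => c₁ * (d₁ * Real.exp (d₁*y)) + c₂ * (d₂ * Real.exp (d₂*y)) :=
    funext fun y => (hW1 y).deriv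
  have hW2 : ∀ y, HasDerivAt (deriv w)
      (c₁ * (d₁ * (d₁ * Real.exp (d₁*y))) + c₂ * (d₂ * (d₂ * Real.exp (d₂*y)))) y := by
    intro y
    rw [hd1w]
    have h1 : HasDerivAt (fun y => Real.exp (d₁*y)) (d₁ * Real.exp (d₁*y)) y := by
      simpa [mul_comm, Function.comp_def] using (Real.hasDerivAt_exp (d₁*y)).comp y
        ((hasDerivAt_id y).const_mul d₁)
    have h2 : HasDerivAt (fun y => Real.exp (d₂*y)) (d₂ * Real.exp (d₂*y)) y := by
      simpa [mul_comm, Function.comp_def] using (Real.hasDerivAt_exp (d₂*y)).comp y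
        ((hasDerivAt_id y).const_mul d₂)
    exact ((h1.const_mul d₁).const_mul c₁).add ((h2.const_mul d₂).const_mul c₂)
  refine ⟨?_, ?_, ?_, hwxR⟩
  · intro y
    rw [(hW2 y).deriv, (hW1 y).deriv, hw y, hwxR, hd1, hd2]
    linear_combination ((c₁ * Real.exp ((-μ - q)*y) + c₂ * Real.exp ((-μ + q)*y))/2) * hq2
  · rw [hw]; simp [ha]
  · have e1 : Real.exp (-(μ + q)*z) = Real.exp (d₁*z) := by
      congr 1; rw [hd1]; ring
    have e2 : Real.exp (-(μ - q)*z) = Real.exp (d₂*z) := by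
      congr 1; rw [hd2]; ring
    rw [hw, ha, hc2]
    rw [hD, e1, e2] at hc1D
    have hc2' := hc2
    nlinarith [hc1D, hc2]
end

section
/- Let μ < 0 and x > 0. Then ∫_x^∞ z · (μ·e^{−μx}·sinh(μx)/sinh²(μz)) dz = x − ((1 − e^{−2μx})/(2μ))·ln(1 − e^{2μx}). Here the integrand is nonnegative and integrable on [x, ∞), and it is the density f_{𝓜_x}(z) = μ·e^{−μx}·sinh(μx)/sinh²(μz) for z ≥ x of the maximum displacement. -/
open Real Set Filter MeasureTheory Topology

theorem stmt_19 (μ x : ℝ) (hμ : μ < 0) (hx : 0 < x) :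
    (∀ z ∈ Set.Ici x,
      0 ≤ z * (μ * Real.exp (-μ*x) * Real.sinh (μ*x) / (Real.sinh (μ*z))^2))
    ∧ MeasureTheory.IntegrableOn
        (fun z => z * (μ * Real.exp (-μ*x) * Real.sinh (μ*x) / (Real.sinh (μ*z))^2))
        (Set.Ici x)
    ∧ ∫ z in Set.Ici x,
        z * (μ * Real.exp (-μ*x) * Real.sinh (μ*x) / (Real.sinh (μ*z))^2)
      = x - ((1 - Real.exp (-2*μ*x)) / (2*μ)) * Real.log (1 - Real.exp (2*μ*x)) := by
  have hμ0 : μ ≠ 0 := hμ.ne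
  set c : ℝ := μ * Real.exp (-μ*x) * Real.sinh (μ*x) with hc
  -- basic facts about c
  have hinv : Real.exp (-2*μ*x) = (Real.exp (2*μ*x))⁻¹ := by
    rw [show -2*μ*x = -(2*μ*x) by ring, Real.exp_neg]
  have hsq : Real.exp (μ*x) * Real.exp (μ*x) = Real.exp (2*μ*x) := by
    rw [← Real.exp_add]; ring_nf
  have hE0 : Real.exp (μ*x) ≠ 0 := Real.exp_ne_zero _
  have ht0 : (0:ℝ) < Real.exp (2*μ*x) := Real.exp_pos _
  have hcval : c = μ * (1 - Real.exp (-2*μ*x)) / 2 := by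
    rw [hc, Real.sinh_eq, show -μ*x = -(μ*x) by ring, Real.exp_neg, hinv]
    field_simp
    rw [show μ*x*2 = 2*μ*x by ring]
    linear_combination hsq
  have hgt : 1 < Real.exp (-2*μ*x) := by
    rw [show (1:ℝ) = Real.exp 0 by simp, Real.exp_lt_exp]
    nlinarith
  have hcpos : 0 < c := by rw [hcval]; nlinarith
  -- nonnegativity of the integrand
  have hnonneg : ∀ z ∈ Set.Ici x, 0 ≤ z * (c / (Real.sinh (μ*z))^2) := by
    intro z hz
    have hz0 : (0:ℝ) ≤ z := (hx.le.trans hz)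
    exact mul_nonneg hz0 (div_nonneg hcpos.le (sq_nonneg _))
  -- the antiderivative
  set G : ℝ → ℝ := fun z => c * ((2/μ) * (z * Real.exp (2*μ*z) / (1 - Real.exp (2*μ*z)))
      + (1/μ^2) * Real.log (1 - Real.exp (2*μ*z))) with hG
  have hderiv : ∀ z ∈ Set.Ici x, HasDerivAt G (z * (c / (Real.sinh (μ*z))^2)) z := by
    intro z hz
    have hz0 : 0 < z := hx.trans_le hz
    have htlt : Real.exp (2*μ*z) < 1 := by
      rw [show (1:ℝ) = Real.exp 0 by simp, Real.exp_lt_exp]; nlinarith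
    have htz : (0:ℝ) < Real.exp (2*μ*z) := Real.exp_pos _
    have hne : 1 - Real.exp (2*μ*z) ≠ 0 := by
      have : 0 < 1 - Real.exp (2*μ*z) := by linarith
      exact this.ne'
    have h1 : HasDerivAt (fun z => Real.exp (2*μ*z)) (2*μ*Real.exp (2*μ*z)) z := by
      simpa [mul_comm] using ((hasDerivAt_id z).const_mul (2*μ)).exp
    have h2 : HasDerivAt (fun z => 1 - Real.exp (2*μ*z)) (-(2*μ*Real.exp (2*μ*z))) z := by
      exact ((hasDerivAt_const z (1:ℝ)).sub h1).congr_deriv (by ring)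
    have h3 : HasDerivAt (fun z => z * Real.exp (2*μ*z))
        (Real.exp (2*μ*z) + z*(2*μ*Real.exp (2*μ*z))) z := by
      exact ((hasDerivAt_id' z).mul h1).congr_deriv (by ring)
    have h4 := h3.div h2 hne
    have h5 := h2.log hne
    have hGd := ((h4.const_mul (2/μ)).add (h5.const_mul (1/μ^2))).const_mul c
    refine hGd.congr_deriv ?_
    symm
    have hs : (Real.sinh (μ*z))^2
        = (1 - Real.exp (2*μ*z))^2 / (4 * Real.exp (2*μ*z)) := by
      have hsqz : Real.exp (μ*z) * Real.exp (μ*z) = Real.exp (2*μ*z) := by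
        rw [← Real.exp_add]; ring_nf
      rw [Real.sinh_eq, show -(μ*z) = -(μ*z) by ring, Real.exp_neg]
      rw [← hsqz]
      have : Real.exp (μ*z) ≠ 0 := Real.exp_ne_zero _
      field_simp
      ring
    rw [hs]
    field_simp
    ring
  -- limit of G at infinity
  have hA : Tendsto (fun z : ℝ => z * Real.exp (2*μ*z)) atTop (𝓝 0) := by
    have h2μ : (0:ℝ) < -(2*μ) := by linarith
    have h := (Real.tendsto_pow_mul_exp_neg_atTop_nhds_zero 1).comp
      (tendsto_id.const_mul_atTop h2μ)
    have h' := h.const_mul (-(2*μ))⁻¹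
    rw [mul_zero] at h'
    refine h'.congr fun z => ?_
    simp only [Function.comp_apply, pow_one, id_eq]
    rw [show -(-(2*μ)*z) = 2*μ*z by ring]
    field_simp
  have hB : Tendsto (fun z : ℝ => 1 - Real.exp (2*μ*z)) atTop (𝓝 1) := by
    have h2μ : (2*μ) < 0 := by linarith
    have h := Real.tendsto_exp_atBot.comp (tendsto_id.const_mul_atTop_of_neg h2μ)
    have := h.const_sub 1
    simpa using this
  have hC : Tendsto (fun z : ℝ => z * Real.exp (2*μ*z) / (1 - Real.exp (2*μ*z)))
      atTop (𝓝 0) := by have := hA.div hB one_ne_zero; rw [zero_div] at this; exact this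
  have hD : Tendsto (fun z : ℝ => Real.log (1 - Real.exp (2*μ*z))) atTop (𝓝 0) := by
    have := (Real.continuousAt_log one_ne_zero).tendsto.comp hB
    rw [Real.log_one] at this; exact this
  have hGlim : Tendsto G atTop (𝓝 0) := by
    have := ((hC.const_mul (2/μ)).add (hD.const_mul (1/μ^2))).const_mul c
    simpa [hG, one_div] using this
  -- integrability and integral value over Ioi
  have hint : IntegrableOn (fun z => z * (c / (Real.sinh (μ*z))^2)) (Set.Ioi x) :=
    integrableOn_Ioi_deriv_of_nonneg' hderiv (fun z hz => hnonneg z (Set.Ioi_subset_Ici_self hz)) hGlim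
  have hval : ∫ z in Set.Ioi x, z * (c / (Real.sinh (μ*z))^2) = 0 - G x :=
    integral_Ioi_of_hasDerivAt_of_nonneg' hderiv (fun z hz => hnonneg z (Set.Ioi_subset_Ici_self hz)) hGlim
  have hxne : 1 - Real.exp (2*μ*x) ≠ 0 := by
    have : Real.exp (2*μ*x) < 1 := by
      rw [show (1:ℝ) = Real.exp 0 by simp, Real.exp_lt_exp]; nlinarith
    have h0 : 0 < 1 - Real.exp (2*μ*x) := by linarith
    exact h0.ne'
  have hGx : G x = -x + ((1 - Real.exp (-2*μ*x)) / (2*μ)) * Real.log (1 - Real.exp (2*μ*x)) := by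
    rw [hG]
    simp only []
    rw [hcval, hinv]
    field_simp
    ring_nf
    have hxne' : 1 - Real.exp (μ*x*2) ≠ 0 := by rw [show μ*x*2 = 2*μ*x by ring]; exact hxne
    field_simp
    ring
  refine ⟨hnonneg, ?_, ?_⟩
  · rw [integrableOn_Ici_iff_integrableOn_Ioi]; exact hint
  · rw [integral_Ici_eq_integral_Ioi, hval, hGx]; ring
end
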